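/- arXiv:1511.09391 — 2 statements merged into one kernel-verified Lean document; each statement's English description precedes it below -/
import Mathlib

section
/- Let Λ be a hereditary artin algebra and T a support-tilting module. Then the Ext-projective objects of the torsion class 𝒢(T) of modules generated by T are exactly the modules in add T. -/
open CategoryTheory

section Defs

variable (Λ : Type) [Ring Λ]

/-- `Ext¹(M, N) = 0`: every short exact sequence `0 → N → E → M → 0` splits. -/
def ExtVanish (M N : Type) [AddCommGroup M] [Module Λ M] [AddCommGroup N] [Module Λ N] : Prop :=
  ∀ (E : Type) [AddCommGroup E] [Module Λ E] (f : N →ₗ[Λ] E) (g : E →ₗ[Λ] M),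
    Function.Injective f → Function.Surjective g → LinearMap.range f = LinearMap.ker g →
    ∃ s : M →ₗ[Λ] E, g.comp s = LinearMap.id

/-- `X` generates `Y`: `Y` is a quotient of a finite direct sum of copies of `X`. -/
def Generates (X Y : Type) [AddCommGroup X] [Module Λ X] [AddCommGroup Y] [Module Λ Y] : Prop :=
  ∃ (n : ℕ) (g : (Fin n → X) →ₗ[Λ] Y), Function.Surjective g

/-- `X` cogenerates `Y`: `Y` embeds into a finite direct sum of copies of `X`. -/
def Cogenerates (X Y : Type) [AddCommGroup X] [Module Λ X] [AddCommGroup Y] [Module Λ Y] : Prop :=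
  ∃ (n : ℕ) (f : Y →ₗ[Λ] (Fin n → X)), Function.Injective f

/-- The endomorphism ring of `M` is a division ring. -/
def IsBrick (M : Type) [AddCommGroup M] [Module Λ M] : Prop :=
  (0 : Module.End Λ M) ≠ 1 ∧ ∀ f : Module.End Λ M, f ≠ 0 → IsUnit f

/-- `X ∈ add T`. -/
def InAdd (T X : Type) [AddCommGroup T] [Module Λ T] [AddCommGroup X] [Module Λ X] : Prop :=
  ∃ (m : ℕ) (ι : X →ₗ[Λ] (Fin m → T)) (p : (Fin m → T) →ₗ[Λ] X), p.comp ι = LinearMap.id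

/-- A module is normal if in any decomposition `M ≅ M' ⊕ M''` with `M'` generating `M''`,
the summand `M''` vanishes. -/
def IsNormal (M : Type) [AddCommGroup M] [Module Λ M] : Prop :=
  ∀ (M' M'' : Type) [AddCommGroup M'] [Module Λ M'] [AddCommGroup M''] [Module Λ M''],
    Nonempty (M ≃ₗ[Λ] M' × M'') → Generates Λ M' M'' → Subsingleton M''

/-- `N` is a normalization of `M`. -/
def IsNormalization (M N : Type) [AddCommGroup M] [Module Λ M] [AddCommGroup N] [Module Λ N] :
    Prop :=
  IsNormal Λ N ∧ ∃ Y : ModuleCat.{0} Λ, Nonempty (M ≃ₗ[Λ] N × Y) ∧ Generates Λ N Y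

/-- An indecomposable (nonzero) module. -/
def Indec (M : Type) [AddCommGroup M] [Module Λ M] : Prop :=
  ¬ Subsingleton M ∧ ∀ (P Q : Type) [AddCommGroup P] [Module Λ P] [AddCommGroup Q] [Module Λ Q],
    Nonempty (M ≃ₗ[Λ] P × Q) → Subsingleton P ∨ Subsingleton Q

/-- `S` is a composition factor of `M` (a subquotient, which for simple `S` is the same). -/
def IsCompositionFactor (M S : Type) [AddCommGroup M] [Module Λ M] [AddCommGroup S]
    [Module Λ S] : Prop :=
  ∃ (B A : Submodule Λ M), A ≤ B ∧
    Nonempty ((B ⧸ Submodule.comap B.subtype A) ≃ₗ[Λ] S)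

/-- Every simple module occurs as a composition factor of `M`. -/
def IsSincere (M : Type) [AddCommGroup M] [Module Λ M] : Prop :=
  ∀ (S : Type) [AddCommGroup S] [Module Λ S], IsSimpleModule Λ S → IsCompositionFactor Λ M S

/-- Submodules of projective modules are projective. -/
def IsHereditaryRing : Prop :=
  ∀ (P : Type) [AddCommGroup P] [Module Λ P], Module.Projective Λ P →
    ∀ N : Submodule Λ P, Module.Projective Λ N

/-- A finite family of pairwise orthogonal bricks. -/
def IsAntichainFam (t : ℕ) (A : Fin t → Type) [∀ i, AddCommGroup (A i)]
    [∀ i, Module Λ (A i)] : Prop :=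
  (∀ i, IsBrick Λ (A i)) ∧ ∀ i j, i ≠ j → ∀ f : A i →ₗ[Λ] A j, f = 0

/-- The antichain is exceptional: it can be reindexed so that `Ext¹(A i, A j) = 0` for `i ≥ j`,
i.e. its Ext-quiver is acyclic. -/
def IsExceptionalFam (t : ℕ) (A : Fin t → Type) [∀ i, AddCommGroup (A i)]
    [∀ i, Module Λ (A i)] : Prop :=
  ∃ σ : Equiv.Perm (Fin t), ∀ i j : Fin t, j ≤ i → ExtVanish Λ (A (σ i)) (A (σ j))

/-- `M` has a finite filtration with successive quotients among the `A j`. -/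
def HasFiltration (t : ℕ) (A : Fin t → Type) [∀ i, AddCommGroup (A i)] [∀ i, Module Λ (A i)]
    (M : Type) [AddCommGroup M] [Module Λ M] : Prop :=
  ∃ (s : ℕ) (F : Fin (s + 1) → Submodule Λ M), Monotone F ∧ F 0 = ⊥ ∧ F (Fin.last s) = ⊤ ∧
    ∀ i : Fin s, ∃ j : Fin t,
      Nonempty ((F i.succ ⧸ Submodule.comap (F i.succ).subtype (F i.castSucc)) ≃ₗ[Λ] A j)

/-- The subcategory `F(A)` of modules filtered by the antichain `A`. -/
def FiltClass (t : ℕ) (A : Fin t → Type) [∀ i, AddCommGroup (A i)] [∀ i, Module Λ (A i)] :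
    Set (ModuleCat.{0} Λ) :=
  {M | HasFiltration Λ t A M}

/-- A thick subcategory of `mod Λ`: closed under isomorphisms, finite direct sums, direct
summands, kernels, cokernels and extensions. -/
structure IsThick (𝒜 : Set (ModuleCat.{0} Λ)) : Prop where
  respIso : ∀ M N : ModuleCat.{0} Λ, (M ≃ₗ[Λ] N) → M ∈ 𝒜 → N ∈ 𝒜
  zero : ModuleCat.of Λ PUnit ∈ 𝒜
  prod : ∀ M N : ModuleCat.{0} Λ, M ∈ 𝒜 → N ∈ 𝒜 → ModuleCat.of Λ (M × N) ∈ 𝒜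
  summand : ∀ (M N : ModuleCat.{0} Λ), M ∈ 𝒜 →
    (∃ (ι : N →ₗ[Λ] M) (p : M →ₗ[Λ] N), p.comp ι = LinearMap.id) → N ∈ 𝒜
  ker : ∀ (M N : ModuleCat.{0} Λ) (f : M →ₗ[Λ] N), M ∈ 𝒜 → N ∈ 𝒜 →
    ModuleCat.of Λ (LinearMap.ker f) ∈ 𝒜
  coker : ∀ (M N : ModuleCat.{0} Λ) (f : M →ₗ[Λ] N), M ∈ 𝒜 → N ∈ 𝒜 →
    ModuleCat.of Λ (N ⧸ LinearMap.range f) ∈ 𝒜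
  extClosed : ∀ (M E N : ModuleCat.{0} Λ) (f : M →ₗ[Λ] E) (g : E →ₗ[Λ] N),
    Function.Injective f → Function.Surjective g → LinearMap.range f = LinearMap.ker g →
    M ∈ 𝒜 → N ∈ 𝒜 → E ∈ 𝒜

/-- A simple object of the (abelian) subcategory `𝒜`. -/
def IsSimpleIn (𝒜 : Set (ModuleCat.{0} Λ)) (M : ModuleCat.{0} Λ) : Prop :=
  M ∈ 𝒜 ∧ ¬ Subsingleton M ∧
    ∀ N : Submodule Λ M, ModuleCat.of Λ N ∈ 𝒜 → N = ⊥ ∨ N = ⊤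

/-- `C` is a cover of the subcategory `𝒜`. -/
def IsCoverOf (𝒜 : Set (ModuleCat.{0} Λ)) (C : ModuleCat.{0} Λ) : Prop :=
  C ∈ 𝒜 ∧ ∀ M ∈ 𝒜, Generates Λ C M

/-- `C` is a cocover of the subcategory `𝒜`. -/
def IsCocoverOf (𝒜 : Set (ModuleCat.{0} Λ)) (C : ModuleCat.{0} Λ) : Prop :=
  C ∈ 𝒜 ∧ ∀ M ∈ 𝒜, Cogenerates Λ C M

/-- A torsion class: a class of modules closed under quotients and extensions. -/
def IsTorsionClass (𝒞 : Set (ModuleCat.{0} Λ)) : Prop :=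
  (∀ M ∈ 𝒞, ∀ (N : ModuleCat.{0} Λ) (f : M →ₗ[Λ] N), Function.Surjective f → N ∈ 𝒞) ∧
  (∀ (M E N : ModuleCat.{0} Λ) (f : M →ₗ[Λ] E) (g : E →ₗ[Λ] N),
    Function.Injective f → Function.Surjective g → LinearMap.range f = LinearMap.ker g →
    M ∈ 𝒞 → N ∈ 𝒞 → E ∈ 𝒞)

/-- `𝒢(T)`: the (finite length) modules generated by `T`. -/
def GenClass (T : Type) [AddCommGroup T] [Module Λ T] : Set (ModuleCat.{0} Λ) :=
  {M | IsFiniteLength Λ M ∧ Generates Λ T M}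

/-- Membership in the two-sided ideal of `Λ` generated by the idempotents annihilating `M`. -/
def InSupportIdeal (M : Type) [AddCommGroup M] [Module Λ M] (a : Λ) : Prop :=
  ∃ (n : ℕ) (x y e : Fin n → Λ),
    (∀ i, IsIdempotentElem (e i) ∧ ∀ m : M, e i • m = 0) ∧ a = ∑ i, x i * e i * y i

end Defs

/-- `T` is a tilting `R`-module: no self-extensions, and `R` is the kernel of a surjective
map in `add T`. -/
def IsTiltingMod (R : Type) [Ring R] (T : Type) [AddCommGroup T] [Module R T] : Prop :=
  ExtVanish R T T ∧
    ∃ X Y : ModuleCat.{0} R, InAdd R T X ∧ InAdd R T Y ∧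
      ∃ (f : R →ₗ[R] X) (g : X →ₗ[R] Y),
        Function.Injective f ∧ Function.Surjective g ∧ LinearMap.range f = LinearMap.ker g

/-- `T` is support-tilting: `T` is a tilting module over its support algebra `Λ(T)`
(presented as any quotient of `Λ` by the ideal generated by the idempotents killing `T`). -/
def IsSupportTilting (Λ : Type) [Ring Λ] (T : Type) [AddCommGroup T] [Module Λ T] : Prop :=
  ∀ (R : Type) [Ring R] (π : Λ →+* R), Function.Surjective π →
    (∀ a : Λ, π a = 0 ↔ InSupportIdeal Λ T a) →
    ∀ [Module R T], (∀ (a : Λ) (x : T), a • x = π a • x) → IsTiltingMod R T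

section MoreDefs
variable (Λ : Type) [Ring Λ]

/-- A factor complement `Y` for `N`: `Y` is generated by `N` and `N ⊕ Y` is support-tilting. -/
def IsFactorComplement (N Y : Type) [AddCommGroup N] [Module Λ N] [AddCommGroup Y]
    [Module Λ Y] : Prop :=
  Generates Λ N Y ∧ IsSupportTilting Λ (N × Y)

/-- A minimal factor complement: a factor complement all of whose factor-complement direct
summands are Morita equivalent to it. -/
def IsMinimalFactorComplement (N Y : Type) [AddCommGroup N] [Module Λ N] [AddCommGroup Y]
    [Module Λ Y] : Prop :=
  IsFactorComplement Λ N Y ∧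
    ∀ Y' : ModuleCat.{0} Λ, InAdd Λ Y Y' → IsFactorComplement Λ N Y' → InAdd Λ Y' Y

/-- `Λ` is representation-finite. -/
def IsRepFinite : Prop :=
  ∃ (t : ℕ) (R : Fin t → ModuleCat.{0} Λ),
    ∀ M : ModuleCat.{0} Λ, IsFiniteLength Λ M → Indec Λ M → ∃ i, Nonempty (M ≃ₗ[Λ] R i)

end MoreDefs
section ExtraDefs
variable (Λ : Type) [Ring Λ]

/-- `X ∈ add {Nf j : j ∈ S}`. -/
def InAddFam (t : ℕ) (Nf : Fin t → Type) [∀ i, AddCommGroup (Nf i)] [∀ i, Module Λ (Nf i)]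
    (S : Set (Fin t)) (X : Type) [AddCommGroup X] [Module Λ X] : Prop :=
  ∃ (m : ℕ) (c : Fin m → Fin t), (∀ a, c a ∈ S) ∧
    ∃ (ι : X →ₗ[Λ] ∀ a, Nf (c a)) (p : (∀ a, Nf (c a)) →ₗ[Λ] X), p.comp ι = LinearMap.id

/-- `X` is killed by the support ideal of `N`, i.e. `X` is a module over the
support algebra `Λ(N)`. -/
def KilledBySupportIdeal (N X : Type) [AddCommGroup N] [Module Λ N] [AddCommGroup X]
    [Module Λ X] : Prop :=
  ∀ a : Λ, InSupportIdeal Λ N a → ∀ x : X, a • x = 0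

end ExtraDefs

/-- An equivalence (automatically exact) between the abelian category `𝒜` and the category
of finite length modules over an artin algebra `B`. -/
structure ArtinAlgebraModel (Λ : Type) [Ring Λ] (𝒜 : Set (ModuleCat.{0} Λ)) where
  k' : Type
  [ck' : CommRing k']
  [ak' : IsArtinianRing k']
  B : Type
  [rB : Ring B]
  [algB : Algebra k' B]
  flB : IsFiniteLength k' B
  equiv : CategoryTheory.ObjectProperty.FullSubcategory (fun M : ModuleCat.{0} Λ => M ∈ 𝒜) ≌
    CategoryTheory.ObjectProperty.FullSubcategory (fun M : ModuleCat.{0} B => IsFiniteLength B M)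

/-- The hom-space from `x` to `y` in the linearization `kP` of a poset `P` over a field `k`:
it is `k` if `x ≤ y` and `0` otherwise; composition is multiplication in `k`. -/
def pHom (kk P : Type) [Field kk] [PartialOrder P] (x y : P) : Type :=
  {c : kk // ¬ x ≤ y → c = 0}




section Aux1
variable {A : Type} [Ring A]
variable {M M' N N' N₁ N₂ : Type}
  [AddCommGroup M] [Module A M] [AddCommGroup M'] [Module A M']
  [AddCommGroup N] [Module A N] [AddCommGroup N'] [Module A N']
  [AddCommGroup N₁] [Module A N₁] [AddCommGroup N₂] [Module A N₂]

theorem extVanish_congr (eM : M ≃ₗ[A] M') (eN : N ≃ₗ[A] N') (h : ExtVanish A M N) :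
    ExtVanish A M' N' := by
  intro E _ _ f g hf hg hr
  obtain ⟨s, hs⟩ := h E (f.comp (eN : N →ₗ[A] N')) ((eM.symm : M' →ₗ[A] M).comp g)
    (hf.comp eN.injective) (eM.symm.surjective.comp hg)
    (by
      rw [LinearMap.range_comp, LinearMap.ker_comp, LinearEquiv.range, Submodule.map_top, hr]
      ext x
      simp [LinearMap.mem_ker])
  refine ⟨s.comp (eM.symm : M' →ₗ[A] M), ?_⟩
  ext m'
  have h1 := LinearMap.congr_fun hs (eM.symm m')
  simp only [LinearMap.comp_apply, LinearMap.id_apply, LinearEquiv.coe_coe] at h1 ⊢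
  have := congrArg eM h1
  simpa using this

theorem extVanish_lift {E : Type} [AddCommGroup E] [Module A E]
    (h : ExtVanish A M N) (f : N →ₗ[A] E) (g : E →ₗ[A] M')
    (hf : Function.Injective f) (hg : Function.Surjective g)
    (hr : LinearMap.range f = LinearMap.ker g) (φ : M →ₗ[A] M') :
    ∃ σ : M →ₗ[A] E, g.comp σ = φ := by
  classical
  let d : E × M →ₗ[A] M' := g.comp (LinearMap.fst A E M) - φ.comp (LinearMap.snd A E M)
  let P := LinearMap.ker d
  let f₂ : N →ₗ[A] P := (f.prod 0).codRestrict P (by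
    intro n
    have : f n ∈ LinearMap.ker g := hr ▸ LinearMap.mem_range_self f n
    simp only [LinearMap.mem_ker] at this
    simp [P, d, LinearMap.mem_ker, this])
  let g₂ : P →ₗ[A] M := (LinearMap.snd A E M).comp P.subtype
  have hf₂ : Function.Injective f₂ := by
    intro a b hab
    apply hf
    have := congrArg (fun x : P => (x : E × M).1) hab
    simpa [f₂] using this
  have hg₂ : Function.Surjective g₂ := by
    intro m
    obtain ⟨e, he⟩ := hg (φ m)
    exact ⟨⟨(e, m), by simp [P, d, LinearMap.mem_ker, he]⟩, rfl⟩
  have hr₂ : LinearMap.range f₂ = LinearMap.ker g₂ := by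
    apply le_antisymm
    · rintro x ⟨n, rfl⟩
      simp [g₂, LinearMap.mem_ker, f₂]
    · rintro ⟨⟨e, m⟩, hem⟩ hx
      simp only [LinearMap.mem_ker, g₂, LinearMap.comp_apply, Submodule.subtype_apply] at hx
      dsimp at hx
      subst hx
      have he : e ∈ LinearMap.ker g := by
        simpa [P, d, LinearMap.mem_ker] using hem
      rw [← hr] at he
      obtain ⟨n, rfl⟩ := he
      exact ⟨n, by ext <;> simp [f₂]⟩
  obtain ⟨s, hs⟩ := h P f₂ g₂ hf₂ hg₂ hr₂
  refine ⟨(LinearMap.fst A E M).comp (P.subtype.comp s), ?_⟩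
  ext m
  have h1 : ((s m : E × M)).2 = m := LinearMap.congr_fun hs m
  have h2 : (s m : E × M) ∈ P := (s m).2
  simp only [P, d, LinearMap.mem_ker, LinearMap.sub_apply, LinearMap.comp_apply,
    LinearMap.fst_apply, LinearMap.snd_apply, sub_eq_zero] at h2
  simp only [LinearMap.comp_apply, LinearMap.fst_apply, Submodule.subtype_apply]
  rw [h2, h1]

theorem extVanish_of_subsingleton [Subsingleton N] : ExtVanish A M N := by
  intro E _ _ f g hf hg hr
  have hker : LinearMap.ker g = ⊥ := by
    rw [← hr]
    apply le_antisymm _ bot_le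
    rintro x ⟨n, rfl⟩
    simp [Subsingleton.elim n 0]
  let e := LinearEquiv.ofBijective g ⟨LinearMap.ker_eq_bot.mp hker, hg⟩
  exact ⟨e.symm, by ext m; simp [e]; exact e.apply_symm_apply m⟩
end Aux1
section Aux2
variable {A : Type} [Ring A]
variable {M M' N N' N₁ N₂ T : Type}
  [AddCommGroup M] [Module A M] [AddCommGroup M'] [Module A M']
  [AddCommGroup N] [Module A N] [AddCommGroup N'] [Module A N']
  [AddCommGroup N₁] [Module A N₁] [AddCommGroup N₂] [Module A N₂]
  [AddCommGroup T] [Module A T]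

theorem extVanish_prod_right (h₁ : ExtVanish A M N₁) (h₂ : ExtVanish A M N₂) :
    ExtVanish A M (N₁ × N₂) := by
  intro E _ _ f g hf hg hr
  set W : Submodule A E := LinearMap.range (f.comp (LinearMap.inl A N₁ N₂)) with hW
  have hWle : W ≤ LinearMap.ker g := by
    rintro x ⟨n₁, rfl⟩
    have : f (n₁, 0) ∈ LinearMap.ker g := hr ▸ LinearMap.mem_range_self f _
    simpa using this
  let g₂ : (E ⧸ W) →ₗ[A] M := W.liftQ g hWle
  let f₂ : N₂ →ₗ[A] E ⧸ W := W.mkQ.comp (f.comp (LinearMap.inr A N₁ N₂))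
  have hf₂ : Function.Injective f₂ := by
    intro a b hab
    rw [← sub_eq_zero] at hab ⊢
    have : f (0, a - b) ∈ W := by
      rw [← Submodule.Quotient.mk_eq_zero W]
      have h0 : f₂ (a - b) = 0 := by rw [map_sub, hab]
      simpa [f₂] using h0
    obtain ⟨n₁, hn₁⟩ := this
    have := hf hn₁
    have h2 := congrArg Prod.snd this
    simpa using h2.symm
  have hg₂ : Function.Surjective g₂ := fun m => by
    obtain ⟨e, rfl⟩ := hg m; exact ⟨W.mkQ e, rfl⟩
  have hr₂ : LinearMap.range f₂ = LinearMap.ker g₂ := by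
    apply le_antisymm
    · rintro x ⟨n₂, rfl⟩
      have : f (0, n₂) ∈ LinearMap.ker g := hr ▸ LinearMap.mem_range_self f _
      simp only [LinearMap.mem_ker] at this ⊢
      simpa [f₂, g₂] using this
    · rintro x hx
      obtain ⟨e, rfl⟩ := W.mkQ_surjective x
      have hge : g e = 0 := by simpa [LinearMap.mem_ker, g₂] using hx
      have : e ∈ LinearMap.range f := hr ▸ (by simpa [LinearMap.mem_ker] using hge)
      obtain ⟨⟨n₁, n₂⟩, rfl⟩ := this
      refine ⟨n₂, ?_⟩
      simp only [f₂, LinearMap.comp_apply, LinearMap.inr_apply]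
      rw [Submodule.mkQ_apply, Submodule.mkQ_apply, Submodule.Quotient.eq]
      refine ⟨-n₁, ?_⟩
      show f (-n₁, 0) = f (0, n₂) - f (n₁, n₂)
      rw [← map_sub]
      congr 1
      ext <;> simp
  obtain ⟨s₂, hs₂⟩ := h₂ (E ⧸ W) f₂ g₂ hf₂ hg₂ hr₂
  let K := LinearMap.ker (W.mkQ - s₂.comp g)
  have memK : ∀ e : E, e ∈ K ↔ W.mkQ e = s₂ (g e) := by
    intro e
    simp [K, LinearMap.mem_ker, sub_eq_zero]
  let f₁ : N₁ →ₗ[A] K := (f.comp (LinearMap.inl A N₁ N₂)).codRestrict K (by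
    intro n₁
    rw [memK]
    have h1 : W.mkQ (f (n₁, 0)) = 0 := (Submodule.Quotient.mk_eq_zero W).mpr ⟨n₁, rfl⟩
    have h2 : g (f (n₁, 0)) = 0 := hWle ⟨n₁, rfl⟩
    simp only [LinearMap.comp_apply, LinearMap.inl_apply, h1, h2, map_zero])
  let g₁ : K →ₗ[A] M := g.comp K.subtype
  have hf₁ : Function.Injective f₁ := by
    intro a b hab
    have : f (a, 0) = f (b, 0) := congrArg Subtype.val hab
    have := congrArg Prod.fst (hf this)
    simpa using this
  have hg₁ : Function.Surjective g₁ := by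
    intro m
    obtain ⟨e, he⟩ := hg m
    have : W.mkQ e - s₂ m ∈ LinearMap.ker g₂ := by
      have hgm : g₂ (s₂ m) = m := LinearMap.congr_fun hs₂ m
      have hge : g₂ (W.mkQ e) = g e := rfl
      rw [LinearMap.mem_ker, map_sub, hge, hgm, he, sub_self]
    rw [← hr₂] at this
    obtain ⟨n₂, hn₂⟩ := this
    refine ⟨⟨e - f (0, n₂), ?_⟩, ?_⟩
    · rw [memK]
      have hg0 : g (f (0, n₂)) = 0 := by
        have : f (0, n₂) ∈ LinearMap.ker g := hr ▸ LinearMap.mem_range_self f _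
        simpa using this
      rw [map_sub, map_sub, hg0, sub_zero, he]
      have : W.mkQ (f (0, n₂)) = f₂ n₂ := rfl
      rw [this, hn₂]
      abel
    · show g (e - f (0, n₂)) = m
      have hg0 : g (f (0, n₂)) = 0 := by
        have : f (0, n₂) ∈ LinearMap.ker g := hr ▸ LinearMap.mem_range_self f _
        simpa using this
      rw [map_sub, hg0, sub_zero, he]
  have hr₁ : LinearMap.range f₁ = LinearMap.ker g₁ := by
    apply le_antisymm
    · rintro x ⟨n₁, rfl⟩
      show g₁ (f₁ n₁) = 0
      have : (f₁ n₁ : E) = f (n₁, 0) := rfl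
      show g ((f₁ n₁ : E)) = 0
      rw [this]
      exact hWle ⟨n₁, rfl⟩
    · rintro ⟨e, heK⟩ hx
      have hge : g e = 0 := hx
      have : e ∈ LinearMap.range f := hr ▸ (by simpa [LinearMap.mem_ker] using hge)
      obtain ⟨⟨n₁, n₂⟩, rfl⟩ := this
      have hmk : W.mkQ (f (n₁, n₂)) = 0 := by
        rw [(memK _).mp heK, hge, map_zero]
      have : f (n₁, n₂) ∈ W := (Submodule.Quotient.mk_eq_zero W).mp hmk
      obtain ⟨n₁', hn₁'⟩ := this
      have heq := hf hn₁'
      have h2 : n₂ = 0 := by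
        have := congrArg Prod.snd heq
        simpa using this.symm
      refine ⟨n₁, ?_⟩
      apply Subtype.ext
      show f (n₁, 0) = f (n₁, n₂)
      rw [h2]
  obtain ⟨s₁, hs₁⟩ := h₁ K f₁ g₁ hf₁ hg₁ hr₁
  refine ⟨K.subtype.comp s₁, ?_⟩
  ext m
  exact LinearMap.congr_fun hs₁ m

/-- Ad-hoc linear equiv `(Fin (n+1) → N) ≃ₗ N × (Fin n → N)`. -/
def piFinSuccLinearEquiv (A N : Type) [Ring A] [AddCommGroup N] [Module A N] (n : ℕ) :
    (Fin (n + 1) → N) ≃ₗ[A] N × (Fin n → N) where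
  toFun v := (v 0, fun i => v i.succ)
  invFun p := Fin.cons p.1 p.2
  map_add' _ _ := rfl
  map_smul' _ _ := rfl
  left_inv v := funext fun i => Fin.cases rfl (fun j => by simp) i
  right_inv p := by ext <;> simp

theorem extVanish_pi_right (h : ExtVanish A M N) (n : ℕ) : ExtVanish A M (Fin n → N) := by
  induction n with
  | zero =>
    haveI : Subsingleton (Fin 0 → N) := ⟨fun a b => funext fun i => i.elim0⟩
    exact extVanish_of_subsingleton
  | succ n ih =>
    exact extVanish_congr (LinearEquiv.refl A M) (piFinSuccLinearEquiv A N n).symm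
      (extVanish_prod_right h ih)
end Aux2

section Aux3
variable {A : Type} [Ring A]
variable {M M' N N' C T : Type}
  [AddCommGroup M] [Module A M] [AddCommGroup M'] [Module A M']
  [AddCommGroup N] [Module A N] [AddCommGroup N'] [Module A N']
  [AddCommGroup C] [Module A C] [AddCommGroup T] [Module A T]

theorem extVanish_summand_right (h : ExtVanish A M N) (ι : N' →ₗ[A] N) (p : N →ₗ[A] N')
    (hpι : p.comp ι = LinearMap.id) : ExtVanish A M N' := by
  intro E _ _ f g hf hg hr
  let δ : N' →ₗ[A] N × E := ι.prod (-f)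
  set W : Submodule A (N × E) := LinearMap.range δ with hWdef
  let f₂ : N →ₗ[A] (N × E) ⧸ W := W.mkQ.comp (LinearMap.inl A N E)
  let g₂ : ((N × E) ⧸ W) →ₗ[A] M := W.liftQ (g.comp (LinearMap.snd A N E)) (by
    rintro x ⟨ν, rfl⟩
    show g (δ ν).2 = 0
    have : f ν ∈ LinearMap.ker g := hr ▸ LinearMap.mem_range_self f ν
    simp only [LinearMap.mem_ker] at this
    simp [δ, this])
  let q : E →ₗ[A] (N × E) ⧸ W := W.mkQ.comp (LinearMap.inr A N E)
  have hgq : ∀ e, g₂ (q e) = g e := fun e => rfl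
  have hf₂ : Function.Injective f₂ := by
    intro a b hab
    rw [← sub_eq_zero] at hab ⊢
    have : ((a - b : N), (0 : E)) ∈ W := by
      rw [← Submodule.Quotient.mk_eq_zero W]
      have h0 : f₂ (a - b) = 0 := by rw [map_sub, hab]
      simpa [f₂] using h0
    obtain ⟨ν, hν⟩ := this
    have h1 : f ν = 0 := by
      have := congrArg Prod.snd hν
      simpa [δ] using this
    have hν0 : ν = 0 := hf (by simpa using h1)
    have := congrArg Prod.fst hν
    simp [δ, hν0] at this
    exact this.symm
  have hg₂ : Function.Surjective g₂ := fun m => by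
    obtain ⟨e, rfl⟩ := hg m; exact ⟨q e, rfl⟩
  have hr₂ : LinearMap.range f₂ = LinearMap.ker g₂ := by
    apply le_antisymm
    · rintro x ⟨n, rfl⟩
      show g₂ (f₂ n) = 0
      show g ((0 : E)) = 0
      simp
    · rintro x hx
      obtain ⟨⟨n, e⟩, rfl⟩ := W.mkQ_surjective x
      have hge : g e = 0 := by simpa [LinearMap.mem_ker, g₂] using hx
      have : e ∈ LinearMap.range f := hr ▸ (by simpa [LinearMap.mem_ker] using hge)
      obtain ⟨ν, rfl⟩ := this
      refine ⟨n + ι ν, ?_⟩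
      simp only [f₂, LinearMap.comp_apply, LinearMap.inl_apply, Submodule.mkQ_apply]
      rw [Submodule.Quotient.eq]
      exact ⟨ν, by ext <;> simp [δ]⟩
  obtain ⟨s₂, hs₂⟩ := h ((N × E) ⧸ W) f₂ g₂ hf₂ hg₂ hr₂
  let r : ((N × E) ⧸ W) →ₗ[A] E := W.liftQ ((f.comp p).comp (LinearMap.fst A N E) +
    LinearMap.snd A N E) (by
      rintro x ⟨ν, rfl⟩
      have : p (ι ν) = ν := LinearMap.congr_fun hpι ν
      simp [δ, this])
  have hgr : g.comp r = g₂ := by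
    apply Submodule.linearMap_qext
    apply LinearMap.ext
    rintro ⟨n, e⟩
    show g (f (p n) + e) = g e
    have : f (p n) ∈ LinearMap.ker g := hr ▸ LinearMap.mem_range_self f _
    simp only [LinearMap.mem_ker] at this
    simp [this]
  refine ⟨r.comp s₂, ?_⟩
  rw [← LinearMap.comp_assoc, hgr, hs₂]

theorem extVanish_pi_left (h : ExtVanish A T N) (m : ℕ) : ExtVanish A (Fin m → T) N := by
  classical
  intro E _ _ f g hf hg hr
  have hσ : ∀ i : Fin m, ∃ σ : T →ₗ[A] E, g.comp σ = LinearMap.single A (fun _ => T) i :=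
    fun i => extVanish_lift h f g hf hg hr _
  choose σ hσ using hσ
  refine ⟨∑ i, (σ i).comp (LinearMap.proj i), ?_⟩
  apply LinearMap.ext
  intro v
  simp only [LinearMap.comp_apply, LinearMap.id_apply, LinearMap.sum_apply, map_sum]
  have key : ∀ i, g ((σ i) (v i)) = Pi.single i (v i) := fun i => by
    have := LinearMap.congr_fun (hσ i) (v i)
    simpa using this
  calc ∑ i, g ((σ i).comp (LinearMap.proj i) v) = ∑ i, Pi.single i (v i) := by
        refine Finset.sum_congr rfl fun i _ => ?_
        simpa using key i
    _ = v := Finset.univ_sum_single v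

theorem extVanish_summand_left (h : ExtVanish A M N) (ι : M' →ₗ[A] M) (p : M →ₗ[A] M')
    (hpι : p.comp ι = LinearMap.id) : ExtVanish A M' N := by
  intro E _ _ f g hf hg hr
  obtain ⟨σ, hσ⟩ := extVanish_lift h f g hf hg hr p
  refine ⟨σ.comp ι, ?_⟩
  rw [← LinearMap.comp_assoc, hσ, hpι]

theorem extVanish_inAdd_left (h : ExtVanish A T N) {m : ℕ} (ι : M →ₗ[A] (Fin m → T))
    (p : (Fin m → T) →ₗ[A] M) (hpι : p.comp ι = LinearMap.id) : ExtVanish A M N :=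
  extVanish_summand_left (extVanish_pi_left h m) ι p hpι

end Aux3

section Aux4
variable {Λ : Type} [Ring Λ]
variable {M N C : Type} [AddCommGroup M] [Module Λ M] [AddCommGroup N] [Module Λ N]
  [AddCommGroup C] [Module Λ C]

theorem extVanish_of_surj (hher : IsHereditaryRing Λ) [Module.Finite Λ M]
    (h : ExtVanish Λ M N) (w : N →ₗ[Λ] C) (hw : Function.Surjective w) : ExtVanish Λ M C := by
  intro E _ _ f g hf hg hr
  obtain ⟨s, ρ, hρ⟩ := Module.Finite.exists_fin' Λ M
  set F := Fin s → Λ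
  haveI hFproj : Module.Projective Λ F := inferInstance
  set Ω : Submodule Λ F := LinearMap.ker ρ with hΩ
  haveI hΩproj : Module.Projective Λ Ω := hher F hFproj Ω
  obtain ⟨α, hα⟩ := Module.projective_lifting_property g ρ hg
  have hαΩ : ∀ ω : Ω, α ω ∈ LinearMap.range f := by
    intro ω
    rw [hr, LinearMap.mem_ker]
    have : g (α ω) = ρ ω := LinearMap.congr_fun hα ω
    rw [this]
    exact ω.2
  let β : Ω →ₗ[Λ] C := ((LinearEquiv.ofInjective f hf).symm : LinearMap.range f →ₗ[Λ] C).comp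
    ((α.comp Ω.subtype).codRestrict (LinearMap.range f) hαΩ)
  have hfβ : ∀ ω : Ω, f (β ω) = α ω := by
    intro ω
    have := (LinearEquiv.ofInjective f hf).apply_symm_apply
      ⟨α ω, hαΩ ω⟩
    have h2 := congrArg Subtype.val this
    exact h2
  obtain ⟨β', hβ'⟩ := Module.projective_lifting_property w β hw
  -- build the extension of M by N
  let δ : Ω →ₗ[Λ] N × F := β'.prod (-(Ω.subtype))
  set W : Submodule Λ (N × F) := LinearMap.range δ with hWdef
  let f₂ : N →ₗ[Λ] (N × F) ⧸ W := W.mkQ.comp (LinearMap.inl Λ N F)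
  let g₂ : ((N × F) ⧸ W) →ₗ[Λ] M := W.liftQ (ρ.comp (LinearMap.snd Λ N F)) (by
    rintro x ⟨ω, rfl⟩
    have : ρ (Ω.subtype ω) = 0 := ω.2
    simpa [δ] using this)
  have hf₂ : Function.Injective f₂ := by
    intro a b hab
    rw [← sub_eq_zero] at hab ⊢
    have : ((a - b : N), (0 : F)) ∈ W := by
      rw [← Submodule.Quotient.mk_eq_zero W]
      have h0 : f₂ (a - b) = 0 := by rw [map_sub, hab]
      simpa [f₂] using h0
    obtain ⟨ω, hω⟩ := this
    have h1 : (ω : F) = 0 := by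
      have := congrArg Prod.snd hω
      simpa [δ] using this
    have hω0 : ω = 0 := Subtype.ext h1
    have := congrArg Prod.fst hω
    simp [δ, hω0] at this
    exact this.symm
  have hg₂ : Function.Surjective g₂ := by
    intro m
    obtain ⟨x, rfl⟩ := hρ m
    exact ⟨W.mkQ (0, x), by simp [g₂]⟩
  have hr₂ : LinearMap.range f₂ = LinearMap.ker g₂ := by
    apply le_antisymm
    · rintro x ⟨n, rfl⟩
      show g₂ (f₂ n) = 0
      show ρ ((0 : F)) = 0
      simp
    · rintro x hx
      obtain ⟨⟨n, y⟩, rfl⟩ := W.mkQ_surjective x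
      have hy : ρ y = 0 := by simpa [LinearMap.mem_ker, g₂] using hx
      set ω : Ω := ⟨y, by simpa [hΩ, LinearMap.mem_ker] using hy⟩
      refine ⟨n + β' ω, ?_⟩
      simp only [f₂, LinearMap.comp_apply, LinearMap.inl_apply, Submodule.mkQ_apply]
      rw [Submodule.Quotient.eq]
      exact ⟨ω, by ext <;> simp [δ, ω]⟩
  obtain ⟨st, hst⟩ := h ((N × F) ⧸ W) f₂ g₂ hf₂ hg₂ hr₂
  let qE : ((N × F) ⧸ W) →ₗ[Λ] E := W.liftQ ((f.comp w).comp (LinearMap.fst Λ N F) +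
    α.comp (LinearMap.snd Λ N F)) (by
      rintro x ⟨ω, rfl⟩
      have h1 : w (β' ω) = β ω := LinearMap.congr_fun hβ' ω
      show f (w (β' ω)) + α (-(Ω.subtype ω)) = 0
      rw [h1, map_neg, hfβ ω]
      simp)
  have hgq : g.comp qE = g₂ := by
    apply Submodule.linearMap_qext
    apply LinearMap.ext
    rintro ⟨n, y⟩
    show g (f (w n) + α y) = ρ y
    have h1 : g (f (w n)) = 0 := by
      have : f (w n) ∈ LinearMap.ker g := hr ▸ LinearMap.mem_range_self f _
      simpa using this
    have h2 : g (α y) = ρ y := LinearMap.congr_fun hα y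
    simp [h1, h2]
  refine ⟨qE.comp st, ?_⟩
  rw [← LinearMap.comp_assoc, hgq, hst]

end Aux4




section Aux5
variable {A : Type} [Ring A]
variable {K X Y Q T : Type} [AddCommGroup K] [Module A K] [AddCommGroup X] [Module A X]
  [AddCommGroup Y] [Module A Y] [AddCommGroup Q] [Module A Q] [AddCommGroup T] [Module A T]

theorem ofInjective_symm_apply' {M N : Type} [AddCommGroup M] [Module A M] [AddCommGroup N]
    [Module A N] {f : M →ₗ[A] N} (hf : Function.Injective f) (x : M)
    (hx : f x ∈ LinearMap.range f) :
    (LinearEquiv.ofInjective f hf).symm ⟨f x, hx⟩ = x := by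
  apply hf
  rw [LinearEquiv.ofInjective_symm_apply]

theorem extVanish_extend (hY : ExtVanish A Y K) (f₀ : Q →ₗ[A] X) (g₀ : X →ₗ[A] Y)
    (hf₀ : Function.Injective f₀) (hg₀ : Function.Surjective g₀)
    (hr₀ : LinearMap.range f₀ = LinearMap.ker g₀) (h : Q →ₗ[A] K) :
    ∃ η : X →ₗ[A] K, η.comp f₀ = h := by
  let δ : Q →ₗ[A] K × X := h.prod (-f₀)
  set W : Submodule A (K × X) := LinearMap.range δ with hWdef
  let f₂ : K →ₗ[A] (K × X) ⧸ W := W.mkQ.comp (LinearMap.inl A K X)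
  let g₂ : ((K × X) ⧸ W) →ₗ[A] Y := W.liftQ (g₀.comp (LinearMap.snd A K X)) (by
    rintro x ⟨q, rfl⟩
    show g₀ (δ q).2 = 0
    have : f₀ q ∈ LinearMap.ker g₀ := hr₀ ▸ LinearMap.mem_range_self f₀ q
    simp only [LinearMap.mem_ker] at this
    simp [δ, this])
  have hf₂ : Function.Injective f₂ := by
    intro a b hab
    rw [← sub_eq_zero] at hab ⊢
    have : ((a - b : K), (0 : X)) ∈ W := by
      rw [← Submodule.Quotient.mk_eq_zero W]
      have h0 : f₂ (a - b) = 0 := by rw [map_sub, hab]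
      simpa [f₂] using h0
    obtain ⟨q, hq⟩ := this
    have h1 : f₀ q = 0 := by
      have := congrArg Prod.snd hq
      simpa [δ] using this
    have hq0 : q = 0 := hf₀ (by simpa using h1)
    have := congrArg Prod.fst hq
    simp [δ, hq0] at this
    exact this.symm
  have hg₂ : Function.Surjective g₂ := by
    intro y
    obtain ⟨x, rfl⟩ := hg₀ y
    exact ⟨W.mkQ (0, x), rfl⟩
  have hr₂ : LinearMap.range f₂ = LinearMap.ker g₂ := by
    apply le_antisymm
    · rintro z ⟨κ, rfl⟩
      show g₂ (f₂ κ) = 0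
      show g₀ ((0 : X)) = 0
      simp
    · rintro z hz
      obtain ⟨⟨κ, x⟩, rfl⟩ := W.mkQ_surjective z
      have hgx : g₀ x = 0 := by simpa [LinearMap.mem_ker, g₂] using hz
      have : x ∈ LinearMap.range f₀ := hr₀ ▸ (by simpa [LinearMap.mem_ker] using hgx)
      obtain ⟨q, rfl⟩ := this
      refine ⟨κ + h q, ?_⟩
      simp only [f₂, LinearMap.comp_apply, LinearMap.inl_apply, Submodule.mkQ_apply]
      rw [Submodule.Quotient.eq]
      exact ⟨q, by ext <;> simp [δ]⟩
  obtain ⟨s₂, hs₂⟩ := hY _ f₂ g₂ hf₂ hg₂ hr₂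
  let idm : ((K × X) ⧸ W) →ₗ[A] ((K × X) ⧸ W) :=
    (LinearMap.id : ((K × X) ⧸ W) →ₗ[A] ((K × X) ⧸ W)) - s₂.comp g₂
  have hmem : ∀ z : (K × X) ⧸ W, idm z ∈ LinearMap.range f₂ := by
    intro z
    rw [hr₂, LinearMap.mem_ker]
    have : g₂ (s₂ (g₂ z)) = g₂ z := LinearMap.congr_fun hs₂ (g₂ z)
    simp [idm, map_sub, this]
  let ρ : ((K × X) ⧸ W) →ₗ[A] K :=
    ((LinearEquiv.ofInjective f₂ hf₂).symm : LinearMap.range f₂ →ₗ[A] K).comp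
      (idm.codRestrict (LinearMap.range f₂) hmem)
  have hρf₂ : ∀ κ : K, ρ (f₂ κ) = κ := by
    intro κ
    have hg0 : g₂ (f₂ κ) = 0 := by
      show g₀ ((0 : X)) = 0
      simp
    have h1 : idm (f₂ κ) = f₂ κ := by
      simp [idm, hg0]
    show (LinearEquiv.ofInjective f₂ hf₂).symm
      ⟨idm (f₂ κ), hmem (f₂ κ)⟩ = κ
    have : (⟨idm (f₂ κ), hmem (f₂ κ)⟩ :
        LinearMap.range f₂) = ⟨f₂ κ, LinearMap.mem_range_self f₂ κ⟩ := Subtype.ext h1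
    rw [this, ofInjective_symm_apply']
  refine ⟨ρ.comp (W.mkQ.comp (LinearMap.inr A K X)), ?_⟩
  apply LinearMap.ext
  intro q
  show ρ (W.mkQ (0, f₀ q)) = h q
  have : W.mkQ (0, f₀ q) = f₂ (h q) := by
    show W.mkQ (0, f₀ q) = W.mkQ (h q, 0)
    rw [Submodule.mkQ_apply, Submodule.mkQ_apply, Submodule.Quotient.eq]
    exact ⟨-q, by ext <;> simp [δ]⟩
  rw [this, hρf₂]

/-- curry -/
def curryLinearEquiv (A T : Type) [Ring A] [AddCommGroup T] [Module A T] (α β : Type) :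
    ((α × β) → T) ≃ₗ[A] (α → β → T) where
  toFun f a b := f (a, b)
  invFun f p := f p.1 p.2
  map_add' _ _ := rfl
  map_smul' _ _ := rfl
  left_inv f := rfl
  right_inv f := rfl

theorem generates_trans {s : ℕ} (hX : Generates A T X) (h : (Fin s → X) →ₗ[A] K)
    (hh : Function.Surjective h) : Generates A T K := by
  obtain ⟨m, u, hu⟩ := hX
  let P : (Fin s → Fin m → T) →ₗ[A] (Fin s → X) := LinearMap.pi fun j => u.comp (LinearMap.proj j)
  have hP : Function.Surjective P := by
    intro w
    choose v hv using fun j => hu (w j)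
    exact ⟨v, funext fun j => hv j⟩
  let e : (Fin (s * m) → T) ≃ₗ[A] (Fin s → Fin m → T) :=
    (LinearEquiv.piCongrLeft' A (fun _ => T) (finProdFinEquiv.symm)).trans
      (curryLinearEquiv A T (Fin s) (Fin m))
  refine ⟨s * m, (h.comp P).comp (e : (Fin (s * m) → T) →ₗ[A] (Fin s → Fin m → T)), ?_⟩
  exact hh.comp (hP.comp e.surjective)

theorem generates_of_span {s : ℕ} (κ : Fin s → K)
    (hκ : Submodule.span A (Set.range κ) = ⊤) (η : Fin s → (X →ₗ[A] K))
    (hη : ∀ j, κ j ∈ LinearMap.range (η j)) (hX : Generates A T X) : Generates A T K := by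
  classical
  let Φ : (Fin s → X) →ₗ[A] K := ∑ j, (η j).comp (LinearMap.proj j)
  have hΦ : Function.Surjective Φ := by
    rw [← LinearMap.range_eq_top]
    rw [eq_top_iff, ← hκ, Submodule.span_le]
    rintro x ⟨j, rfl⟩
    obtain ⟨y, hy⟩ := hη j
    refine ⟨Pi.single j y, ?_⟩
    show (∑ i, (η i).comp (LinearMap.proj i)) (Pi.single j y) = κ j
    rw [LinearMap.sum_apply]
    rw [Finset.sum_eq_single j]
    · simpa using hy
    · intro i _ hij
      simp [Pi.single_apply, hij]
    · intro hj
      exact absurd (Finset.mem_univ j) hj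
  exact generates_trans hX Φ hΦ

end Aux5
section Supp
variable {Λ : Type} [Ring Λ] {T : Type} [AddCommGroup T] [Module Λ T]

theorem inSupportIdeal_zero : InSupportIdeal Λ T 0 :=
  ⟨0, 0, 0, 0, fun i => i.elim0, by simp⟩

theorem inSupportIdeal_add {a b : Λ} (ha : InSupportIdeal Λ T a) (hb : InSupportIdeal Λ T b) :
    InSupportIdeal Λ T (a + b) := by
  obtain ⟨n, x, y, e, he, rfl⟩ := ha
  obtain ⟨n', x', y', e', he', rfl⟩ := hb
  refine ⟨n + n', Fin.append x x', Fin.append y y', Fin.append e e', ?_, ?_⟩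
  · intro i
    refine Fin.addCases (fun j => ?_) (fun j => ?_) i
    · simpa [Fin.append_left] using he j
    · simpa [Fin.append_right] using he' j
  · rw [Fin.sum_univ_add]
    simp [Fin.append_left, Fin.append_right]

theorem inSupportIdeal_neg {a : Λ} (ha : InSupportIdeal Λ T a) : InSupportIdeal Λ T (-a) := by
  obtain ⟨n, x, y, e, he, rfl⟩ := ha
  exact ⟨n, fun i => -(x i), y, e, he, by simp [neg_mul]⟩

theorem inSupportIdeal_mul_left (c : Λ) {a : Λ} (ha : InSupportIdeal Λ T a) :
    InSupportIdeal Λ T (c * a) := by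
  obtain ⟨n, x, y, e, he, rfl⟩ := ha
  exact ⟨n, fun i => c * x i, y, e, he, by simp [Finset.mul_sum, mul_assoc]⟩

theorem inSupportIdeal_mul_right (c : Λ) {a : Λ} (ha : InSupportIdeal Λ T a) :
    InSupportIdeal Λ T (a * c) := by
  obtain ⟨n, x, y, e, he, rfl⟩ := ha
  refine ⟨n, x, fun i => y i * c, e, he, ?_⟩
  rw [Finset.sum_mul]
  simp [mul_assoc]

theorem inSupportIdeal_kills {a : Λ} (h : InSupportIdeal Λ T a) (t : T) : a • t = 0 := by
  obtain ⟨n, x, y, e, he, rfl⟩ := h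
  rw [Finset.sum_smul]
  refine Finset.sum_eq_zero fun i _ => ?_
  rw [mul_smul, mul_smul, (he i).2, smul_zero]

theorem inSupportIdeal_kills_ext {W₁ W₂ E : Type} [AddCommGroup W₁] [Module Λ W₁]
    [AddCommGroup W₂] [Module Λ W₂] [AddCommGroup E] [Module Λ E]
    (f : W₂ →ₗ[Λ] E) (g : E →ₗ[Λ] W₁) (hr : LinearMap.range f = LinearMap.ker g)
    (h₁ : ∀ a, InSupportIdeal Λ T a → ∀ w : W₁, a • w = 0)
    (h₂ : ∀ a, InSupportIdeal Λ T a → ∀ w : W₂, a • w = 0) :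
    ∀ a, InSupportIdeal Λ T a → ∀ x : E, a • x = 0 := by
  have key : ∀ i : Λ, IsIdempotentElem i → (∀ t : T, i • t = 0) → ∀ x : E, i • x = 0 := by
    intro i hi hiT x
    have hiS : InSupportIdeal Λ T i :=
      ⟨1, fun _ => 1, fun _ => 1, fun _ => i, fun _ => ⟨hi, hiT⟩, by simp⟩
    have hgx : g (i • x) = 0 := by rw [map_smul, h₁ i hiS]
    have : i • x ∈ LinearMap.range f := hr ▸ (by simpa [LinearMap.mem_ker] using hgx)
    obtain ⟨w, hw⟩ := this
    have h2 : i • (i • x) = i • x := by rw [← mul_smul, hi.eq]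
    rw [← h2, ← hw, ← map_smul, h₂ i hiS w, map_zero]
  intro a ha x
  obtain ⟨n, xx, yy, ee, he, rfl⟩ := ha
  rw [Finset.sum_smul]
  refine Finset.sum_eq_zero fun i _ => ?_
  rw [mul_smul, mul_smul, key (ee i) (he i).1 (he i).2, smul_zero]

/-- Descend a `Λ`-module structure to `R` along a surjective ring hom whose kernel kills `E`. -/
noncomputable def liftModule {R : Type} [Ring R] (π : Λ →+* R) (hπ : Function.Surjective π)
    (E : Type) [AddCommGroup E] [Module Λ E]
    (hkill : ∀ a : Λ, π a = 0 → ∀ x : E, a • x = 0) : Module R E :=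
  have key : ∀ a b : Λ, π a = π b → ∀ x : E, a • x = b • x := fun a b hab x => by
    have h0 : (a - b) • x = 0 := hkill _ (by rw [map_sub, hab, sub_self]) x
    rw [sub_smul, sub_eq_zero] at h0
    exact h0
  { smul := fun r x => Function.surjInv hπ r • x
    one_smul := fun x => by
      show Function.surjInv hπ (1 : R) • x = x
      rw [key (Function.surjInv hπ (1 : R)) 1 (by rw [Function.surjInv_eq hπ, map_one]) x,
        one_smul]
    mul_smul := fun r s x => by
      show Function.surjInv hπ (r * s) • x = Function.surjInv hπ r • Function.surjInv hπ s • x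
      rw [← mul_smul]
      exact key _ _ (by rw [Function.surjInv_eq hπ, map_mul, Function.surjInv_eq hπ,
        Function.surjInv_eq hπ]) x
    smul_zero := fun r => smul_zero _
    smul_add := fun r x y => smul_add _ x y
    add_smul := fun r s x => by
      show Function.surjInv hπ (r + s) • x =
        Function.surjInv hπ r • x + Function.surjInv hπ s • x
      rw [← add_smul]
      exact key _ _ (by rw [Function.surjInv_eq hπ, map_add, Function.surjInv_eq hπ,
        Function.surjInv_eq hπ]) x
    zero_smul := fun x => by
      show Function.surjInv hπ (0 : R) • x = 0
      exact hkill (Function.surjInv hπ (0 : R)) (by rw [Function.surjInv_eq hπ]) x }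

theorem liftModule_compat {R : Type} [Ring R] (π : Λ →+* R) (hπ : Function.Surjective π)
    (E : Type) [AddCommGroup E] [Module Λ E]
    (hkill : ∀ a : Λ, π a = 0 → ∀ x : E, a • x = 0) :
    letI := liftModule π hπ E hkill
    ∀ (a : Λ) (x : E), a • x = π a • x := by
  letI := liftModule π hπ E hkill
  intro a x
  show a • x = Function.surjInv hπ (π a) • x
  have h0 : (a - Function.surjInv hπ (π a)) • x = 0 :=
    hkill _ (by rw [map_sub, Function.surjInv_eq hπ, sub_self]) x
  rw [sub_smul, sub_eq_zero] at h0
  exact h0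

/-- Convert an `R`-linear map into a `Λ`-linear map, given compatible actions. -/
def toLambdaLin {R : Type} [Ring R] (π : Λ →+* R) {W₁ W₂ : Type}
    [AddCommGroup W₁] [Module Λ W₁] [Module R W₁] [AddCommGroup W₂] [Module Λ W₂] [Module R W₂]
    (h₁ : ∀ (a : Λ) (w : W₁), a • w = π a • w) (h₂ : ∀ (a : Λ) (w : W₂), a • w = π a • w)
    (f : W₁ →ₗ[R] W₂) : W₁ →ₗ[Λ] W₂ where
  toFun := f
  map_add' := f.map_add
  map_smul' a w := by
    simp only [RingHom.id_apply]
    rw [h₁, h₂, map_smul]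

/-- Convert a `Λ`-linear map into an `R`-linear map, given compatible actions. -/
def toRLin {R : Type} [Ring R] (π : Λ →+* R) (hπ : Function.Surjective π) {W₁ W₂ : Type}
    [AddCommGroup W₁] [Module Λ W₁] [Module R W₁] [AddCommGroup W₂] [Module Λ W₂] [Module R W₂]
    (h₁ : ∀ (a : Λ) (w : W₁), a • w = π a • w) (h₂ : ∀ (a : Λ) (w : W₂), a • w = π a • w)
    (f : W₁ →ₗ[Λ] W₂) : W₁ →ₗ[R] W₂ where
  toFun := f
  map_add' := f.map_add
  map_smul' r w := by
    obtain ⟨a, rfl⟩ := hπ r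
    simp only [RingHom.id_apply]
    rw [← h₁, ← h₂, map_smul]

theorem extVanish_Λ_of_R {R : Type} [Ring R] (π : Λ →+* R) (hπ : Function.Surjective π)
    (hker : ∀ a : Λ, π a = 0 ↔ InSupportIdeal Λ T a) {W₁ W₂ : Type}
    [AddCommGroup W₁] [Module Λ W₁] [Module R W₁] [AddCommGroup W₂] [Module Λ W₂] [Module R W₂]
    (h₁ : ∀ (a : Λ) (w : W₁), a • w = π a • w) (h₂ : ∀ (a : Λ) (w : W₂), a • w = π a • w)
    (h : ExtVanish R W₁ W₂) : ExtVanish Λ W₁ W₂ := by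
  intro E _ _ f g hf hg hr
  have k₁ : ∀ a, InSupportIdeal Λ T a → ∀ w : W₁, a • w = 0 := fun a ha w => by
    rw [h₁, (hker a).mpr ha, zero_smul]
  have k₂ : ∀ a, InSupportIdeal Λ T a → ∀ w : W₂, a • w = 0 := fun a ha w => by
    rw [h₂, (hker a).mpr ha, zero_smul]
  have kE : ∀ a : Λ, π a = 0 → ∀ x : E, a • x = 0 := fun a ha =>
    inSupportIdeal_kills_ext f g hr k₁ k₂ a ((hker a).mp ha)
  letI : Module R E := liftModule π hπ E kE
  have compatE : ∀ (a : Λ) (x : E), a • x = π a • x := liftModule_compat π hπ E kE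
  let f' : W₂ →ₗ[R] E := toRLin π hπ h₂ compatE f
  let g' : E →ₗ[R] W₁ := toRLin π hπ compatE h₁ g
  have hr' : LinearMap.range f' = LinearMap.ker g' := by
    ext x
    have hx : x ∈ LinearMap.range f ↔ x ∈ LinearMap.ker g := by rw [hr]
    rw [LinearMap.mem_range, LinearMap.mem_ker] at hx ⊢
    exact hx
  obtain ⟨s', hs'⟩ := h E f' g' hf hg hr'
  refine ⟨toLambdaLin π h₁ compatE s', ?_⟩
  apply LinearMap.ext
  intro w
  exact LinearMap.congr_fun hs' w

theorem extVanish_R_of_Λ {R : Type} [Ring R] (π : Λ →+* R) (hπ : Function.Surjective π)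
    {W₁ W₂ : Type}
    [AddCommGroup W₁] [Module Λ W₁] [Module R W₁] [AddCommGroup W₂] [Module Λ W₂] [Module R W₂]
    (h₁ : ∀ (a : Λ) (w : W₁), a • w = π a • w) (h₂ : ∀ (a : Λ) (w : W₂), a • w = π a • w)
    (h : ExtVanish Λ W₁ W₂) : ExtVanish R W₁ W₂ := by
  intro E _ _ f g hf hg hr
  letI : Module Λ E := Module.compHom E π
  have compatE : ∀ (a : Λ) (x : E), a • x = π a • x := fun a x => rfl
  let f' : W₂ →ₗ[Λ] E := toLambdaLin π h₂ compatE f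
  let g' : E →ₗ[Λ] W₁ := toLambdaLin π compatE h₁ g
  have hr' : LinearMap.range f' = LinearMap.ker g' := by
    ext x
    have hx : x ∈ LinearMap.range f ↔ x ∈ LinearMap.ker g := by rw [hr]
    rw [LinearMap.mem_range, LinearMap.mem_ker] at hx ⊢
    exact hx
  obtain ⟨s', hs'⟩ := h E f' g' hf hg hr'
  refine ⟨toRLin π hπ h₁ compatE s', ?_⟩
  apply LinearMap.ext
  intro w
  exact LinearMap.congr_fun hs' w

end Supp
section Trace
variable {Λ : Type} [Ring Λ]

/-- The pushout argument: if `u : T^r → M` is surjective with the `Hom(T,·)`-lifting property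
and `Ext¹(T, T^r) = 0`, then `Ext¹(T, ker u) = 0`. -/
theorem extVanish_ker {T M : Type} [AddCommGroup T] [Module Λ T] [AddCommGroup M] [Module Λ M]
    {r : ℕ} (hTT : ExtVanish Λ T (Fin r → T)) (u : (Fin r → T) →ₗ[Λ] M)
    (hlift : ∀ h : T →ₗ[Λ] M, ∃ φ : T →ₗ[Λ] (Fin r → T), u.comp φ = h) :
    ExtVanish Λ T (LinearMap.ker u) := by
  set K := LinearMap.ker u with hK
  intro E _ _ f g hf hg hr
  let ι : K →ₗ[Λ] (Fin r → T) := K.subtype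
  let δ : K →ₗ[Λ] ((Fin r → T) × E) := ι.prod (-f)
  set W : Submodule Λ ((Fin r → T) × E) := LinearMap.range δ with hWdef
  let f' : (Fin r → T) →ₗ[Λ] (((Fin r → T) × E) ⧸ W) := W.mkQ.comp (LinearMap.inl Λ _ _)
  let g' : (((Fin r → T) × E) ⧸ W) →ₗ[Λ] T := W.liftQ (g.comp (LinearMap.snd Λ _ _)) (by
    rintro z ⟨κ, rfl⟩
    show g (δ κ).2 = 0
    have : f κ ∈ LinearMap.ker g := hr ▸ LinearMap.mem_range_self f κ
    simp only [LinearMap.mem_ker] at this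
    simp [δ, this])
  let q : E →ₗ[Λ] (((Fin r → T) × E) ⧸ W) := W.mkQ.comp (LinearMap.inr Λ _ _)
  have hf' : Function.Injective f' := by
    intro a b hab
    rw [← sub_eq_zero] at hab ⊢
    have : ((a - b : Fin r → T), (0 : E)) ∈ W := by
      rw [← Submodule.Quotient.mk_eq_zero W]
      have h0 : f' (a - b) = 0 := by rw [map_sub, hab]
      simpa [f'] using h0
    obtain ⟨κ, hκ⟩ := this
    have h1 : f κ = 0 := by
      have := congrArg Prod.snd hκ
      simpa [δ] using this
    have hκ0 : κ = 0 := hf (by simpa using h1)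
    have := congrArg Prod.fst hκ
    simp [δ, hκ0] at this
    exact this.symm
  have hq : Function.Injective q := by
    intro a b hab
    rw [← sub_eq_zero] at hab ⊢
    have : ((0 : Fin r → T), (a - b : E)) ∈ W := by
      rw [← Submodule.Quotient.mk_eq_zero W]
      have h0 : q (a - b) = 0 := by rw [map_sub, hab]
      simpa [q] using h0
    obtain ⟨κ, hκ⟩ := this
    have h1 : ι κ = 0 := by
      have := congrArg Prod.fst hκ
      simpa [δ] using this
    have hκ0 : κ = 0 := by
      apply Subtype.ext
      simpa [ι] using h1
    have := congrArg Prod.snd hκ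
    simp [δ, hκ0] at this
    exact this.symm
  have hg' : Function.Surjective g' := by
    intro t
    obtain ⟨e, rfl⟩ := hg t
    exact ⟨q e, rfl⟩
  have hr' : LinearMap.range f' = LinearMap.ker g' := by
    apply le_antisymm
    · rintro z ⟨v, rfl⟩
      show g' (f' v) = 0
      show g ((0 : E)) = 0
      simp
    · rintro z hz
      obtain ⟨⟨v, e⟩, rfl⟩ := W.mkQ_surjective z
      have hge : g e = 0 := by simpa [LinearMap.mem_ker, g'] using hz
      have : e ∈ LinearMap.range f := hr ▸ (by simpa [LinearMap.mem_ker] using hge)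
      obtain ⟨κ, rfl⟩ := this
      refine ⟨v + ι κ, ?_⟩
      simp only [f', LinearMap.comp_apply, LinearMap.inl_apply, Submodule.mkQ_apply]
      rw [Submodule.Quotient.eq]
      exact ⟨κ, by ext <;> simp [δ]⟩
  obtain ⟨s', hs'⟩ := hTT _ f' g' hf' hg' hr'
  -- the map `v : E' → M`
  let v : (((Fin r → T) × E) ⧸ W) →ₗ[Λ] M := W.liftQ (u.comp (LinearMap.fst Λ _ _)) (by
    rintro z ⟨κ, rfl⟩
    show u (δ κ).1 = 0
    have : (κ : Fin r → T) ∈ LinearMap.ker u := κ.2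
    simpa [δ, ι] using this)
  obtain ⟨φ, hφ⟩ := hlift (v.comp s')
  let θ : T →ₗ[Λ] (((Fin r → T) × E) ⧸ W) := s' - f'.comp φ
  have hθmem : ∀ t : T, θ t ∈ LinearMap.range q := by
    intro t
    obtain ⟨⟨x, e⟩, hxe⟩ := W.mkQ_surjective (s' t)
    have hux : u x = u (φ t) := by
      have h1 : v (s' t) = u (φ t) := (LinearMap.congr_fun hφ t).symm
      rw [← hxe] at h1
      exact h1
    have hxker : x - φ t ∈ LinearMap.ker u := by
      rw [LinearMap.mem_ker, map_sub, hux, sub_self]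
    set κ : K := ⟨x - φ t, hxker⟩
    refine ⟨e + f κ, ?_⟩
    show W.mkQ (0, e + f κ) = θ t
    have h2 : θ t = W.mkQ (x - φ t, e) := by
      show s' t - f' (φ t) = W.mkQ (x - φ t, e)
      rw [← hxe]
      show W.mkQ (x, e) - W.mkQ (φ t, 0) = W.mkQ (x - φ t, e)
      rw [← map_sub]
      congr 1
      ext <;> simp
    rw [h2, Submodule.mkQ_apply, Submodule.mkQ_apply, Submodule.Quotient.eq]
    refine ⟨-κ, Prod.ext ?_ ?_⟩
    · show ι (-κ) = 0 - (x - φ t)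
      simp [ι, κ]
    · show (-f) (-κ) = (e + f κ) - e
      simp
  let s : T →ₗ[Λ] E :=
    ((LinearEquiv.ofInjective q hq).symm : LinearMap.range q →ₗ[Λ] E).comp
      (θ.codRestrict (LinearMap.range q) hθmem)
  refine ⟨s, ?_⟩
  apply LinearMap.ext
  intro t
  have hqs : q (s t) = θ t := by
    show q ((LinearEquiv.ofInjective q hq).symm ⟨θ t, hθmem t⟩) = θ t
    rw [LinearEquiv.ofInjective_symm_apply]
  have hgq : ∀ e : E, g' (q e) = g e := fun e => rfl
  have : g' (q (s t)) = g' (θ t) := by rw [hqs]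
  rw [hgq] at this
  have hθ : g' (θ t) = t := by
    show g' (s' t - f' (φ t)) = t
    rw [map_sub]
    have h1 : g' (s' t) = t := LinearMap.congr_fun hs' t
    have h2 : g' (f' (φ t)) = 0 := by
      show g ((0 : E)) = 0
      simp
    rw [h1, h2, sub_zero]
  show g (s t) = t
  rw [this, hθ]

end Trace
section TraceMap

theorem exists_trace_map (k : Type) [CommRing k] [IsArtinianRing k]
    {Λ : Type} [Ring Λ] [Algebra k Λ] (hart : IsFiniteLength k Λ)
    {T M : Type} [AddCommGroup T] [Module Λ T] [AddCommGroup M] [Module Λ M]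
    (hTfl : IsFiniteLength Λ T) (hMfl : IsFiniteLength Λ M) (hgen : Generates Λ T M) :
    ∃ (r : ℕ) (u : (Fin r → T) →ₗ[Λ] M), Function.Surjective u ∧
      ∀ h : T →ₗ[Λ] M, ∃ φ : T →ₗ[Λ] (Fin r → T), u.comp φ = h := by
  classical
  letI : Module k T := Module.compHom T (algebraMap k Λ)
  letI : Module k M := Module.compHom M (algebraMap k Λ)
  have hsT : ∀ (c : k) (t : T), c • t = algebraMap k Λ c • t := fun _ _ => rfl
  have hsM : ∀ (c : k) (m : M), c • m = algebraMap k Λ c • m := fun _ _ => rfl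
  haveI : SMulCommClass Λ k M := ⟨fun a c m => by
    rw [hsM, hsM, ← mul_smul, ← mul_smul, Algebra.commutes]⟩
  haveI : SMulCommClass Λ k T := ⟨fun a c t => by
    rw [hsT, hsT, ← mul_smul, ← mul_smul, Algebra.commutes]⟩
  haveI hNkΛ : IsNoetherian k Λ := (isFiniteLength_iff_isNoetherian_isArtinian.mp hart).1
  haveI hNT : IsNoetherian Λ T := (isFiniteLength_iff_isNoetherian_isArtinian.mp hTfl).1
  haveI hNM : IsNoetherian Λ M := (isFiniteLength_iff_isNoetherian_isArtinian.mp hMfl).1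
  haveI : Module.Finite Λ M := ⟨IsNoetherian.noetherian ⊤⟩
  haveI : Module.Finite Λ T := ⟨IsNoetherian.noetherian ⊤⟩
  -- M is a Noetherian k-module
  obtain ⟨n, ψ, hψ⟩ := Module.Finite.exists_fin' Λ M
  let ψk : (Fin n → Λ) →ₗ[k] M :=
    { toFun := ψ
      map_add' := ψ.map_add
      map_smul' := fun c v => by
        simp only [RingHom.id_apply]
        have h1 : c • v = (algebraMap k Λ c) • v := funext fun i => Algebra.smul_def c (v i)
        rw [h1, map_smul, hsM]
      }
  haveI : IsNoetherian k M := isNoetherian_of_surjective ψk (LinearMap.range_eq_top.mpr hψ)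
  -- Hom (T, M) is a Noetherian k-module
  obtain ⟨nT, tgen, htgen⟩ := Module.Finite.exists_fin (R := Λ) (M := T)
  let ev : (T →ₗ[Λ] M) →ₗ[k] (Fin nT → M) := LinearMap.pi fun i =>
    { toFun := fun h => h (tgen i)
      map_add' := fun h₁ h₂ => rfl
      map_smul' := fun c h => rfl }
  have hev : Function.Injective ev := by
    intro h₁ h₂ hev
    apply LinearMap.ext
    intro x
    have hx : x ∈ Submodule.span Λ (Set.range tgen) := htgen ▸ Submodule.mem_top
    induction hx using Submodule.span_induction with
    | mem y hy =>
      obtain ⟨i, rfl⟩ := hy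
      exact congrFun hev i
    | zero => simp
    | add y z _ _ hy hz => rw [map_add, map_add, hy, hz]
    | smul a y _ hy => rw [map_smul, map_smul, hy]
  haveI : IsNoetherian k (T →ₗ[Λ] M) := isNoetherian_of_injective ev hev
  haveI : Module.Finite k (T →ₗ[Λ] M) := ⟨IsNoetherian.noetherian ⊤⟩
  obtain ⟨r, fam, hfam⟩ := Module.Finite.exists_fin (R := k) (M := T →ₗ[Λ] M)
  let u : (Fin r → T) →ₗ[Λ] M := ∑ i, (fam i).comp (LinearMap.proj i)
  have hlift : ∀ h : T →ₗ[Λ] M, ∃ φ : T →ₗ[Λ] (Fin r → T), u.comp φ = h := by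
    intro h
    have hh : h ∈ Submodule.span k (Set.range fam) := hfam ▸ Submodule.mem_top
    rw [Submodule.mem_span_range_iff_exists_fun] at hh
    obtain ⟨c, hc⟩ := hh
    let φ : T →ₗ[Λ] (Fin r → T) := LinearMap.pi fun i =>
      { toFun := fun t => c i • t
        map_add' := fun t₁ t₂ => smul_add _ _ _
        map_smul' := fun a t => by
          simp only [RingHom.id_apply]
          exact (smul_comm a (c i) t).symm }
    refine ⟨φ, ?_⟩
    apply LinearMap.ext
    intro t
    show u (φ t) = h t
    have : u (φ t) = ∑ i, (fam i) (c i • t) := by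
      simp [u, φ, LinearMap.sum_apply]
    rw [this]
    have h2 : ∀ i, (fam i) (c i • t) = (c i • fam i) t := fun i => by
      rw [hsT, map_smul]
      rfl
    rw [Finset.sum_congr rfl fun i _ => h2 i]
    rw [← LinearMap.sum_apply, hc]
  refine ⟨r, u, ?_, hlift⟩
  -- surjectivity
  obtain ⟨n0, g0, hg0⟩ := hgen
  intro m
  obtain ⟨v, rfl⟩ := hg0 m
  have hrange : g0 v ∈ LinearMap.range u := by
    have hv : g0 v = ∑ i, g0 (Pi.single i (v i)) := by
      rw [← map_sum, Finset.univ_sum_single]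
    rw [hv]
    apply Submodule.sum_mem
    intro i _
    obtain ⟨φ, hφ⟩ := hlift (g0.comp (LinearMap.single Λ (fun _ => T) i))
    refine ⟨φ (v i), ?_⟩
    have := LinearMap.congr_fun hφ (v i)
    simpa using this
  exact hrange

end TraceMap
section SuppCon
variable (Λ : Type) [Ring Λ] (T : Type) [AddCommGroup T] [Module Λ T]

/-- The congruence relation on `Λ` given by the support ideal of `T`. -/
def suppCon : RingCon Λ :=
  (TwoSidedIdeal.mk' {a | InSupportIdeal Λ T a} inSupportIdeal_zero
    (fun hx hy => inSupportIdeal_add hx hy) (fun hx => inSupportIdeal_neg hx)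
    (fun hy => inSupportIdeal_mul_left _ hy) (fun hx => inSupportIdeal_mul_right _ hx)).ringCon

/-- The projection onto the support algebra. -/
def suppPi : Λ →+* (suppCon Λ T).Quotient := (suppCon Λ T).mk'

theorem suppPi_surjective : Function.Surjective (suppPi Λ T) := fun x =>
  Quotient.inductionOn' x fun a => ⟨a, rfl⟩

theorem suppPi_zero_iff (a : Λ) : suppPi Λ T a = 0 ↔ InSupportIdeal Λ T a := by
  have h0 : (0 : (suppCon Λ T).Quotient) = suppPi Λ T 0 := (map_zero _).symm
  rw [h0]
  constructor
  · intro h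
    have h1 : suppCon Λ T a 0 := (RingCon.eq (suppCon Λ T)).mp h
    have h2 : InSupportIdeal Λ T (a - 0) := h1
    simpa using h2
  · intro h
    refine (RingCon.eq (suppCon Λ T)).mpr ?_
    show InSupportIdeal Λ T (a - 0)
    simpa using h

end SuppCon
/-- For a support-tilting module `T`, the Ext-projective objects of the torsion class
`𝒢(T)` are exactly the modules in `add T`. -/
theorem stmt10 (k : Type) [CommRing k] [IsArtinianRing k]
    (Λ : Type) [Ring Λ] [Algebra k Λ] (hart : IsFiniteLength k Λ)
    (hher : IsHereditaryRing Λ)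
    (T : Type) [AddCommGroup T] [Module Λ T] (hTfl : IsFiniteLength Λ T)
    (hT : IsSupportTilting Λ T) :
    ∀ M : ModuleCat.{0} Λ, IsFiniteLength Λ M →
      ((Generates Λ T M ∧
        ∀ C : ModuleCat.{0} Λ, IsFiniteLength Λ C → Generates Λ T C →
          ExtVanish Λ M C) ↔ InAdd Λ T M) := by
  classical
  -- set up the support algebra
  let π : Λ →+* (suppCon Λ T).Quotient := suppPi Λ T
  have hπs : Function.Surjective π := suppPi_surjective Λ T
  have hker : ∀ a : Λ, π a = 0 ↔ InSupportIdeal Λ T a := suppPi_zero_iff Λ T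
  have hkillT : ∀ a : Λ, π a = 0 → ∀ t : T, a • t = 0 := fun a ha t =>
    inSupportIdeal_kills ((hker a).mp ha) t
  letI : Module (suppCon Λ T).Quotient T := liftModule π hπs T hkillT
  have compatT : ∀ (a : Λ) (t : T), a • t = π a • t := liftModule_compat π hπs T hkillT
  have htilt := hT (suppCon Λ T).Quotient π hπs hker compatT
  obtain ⟨hTT_R, X, Y, hX, hY, f₀, g₀, hf₀, hg₀, hr₀⟩ := htilt
  have hTT : ExtVanish Λ T T := extVanish_Λ_of_R π hπs hker compatT compatT hTT_R
  haveI hNT : IsNoetherian Λ T := (isFiniteLength_iff_isNoetherian_isArtinian.mp hTfl).1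
  haveI hAT : IsArtinian Λ T := (isFiniteLength_iff_isNoetherian_isArtinian.mp hTfl).2
  haveI : Module.Finite Λ T := ⟨IsNoetherian.noetherian ⊤⟩
  intro M hMfl
  constructor
  · -- Ext-projective in 𝒢(T) implies `add T`
    rintro ⟨hgenM, hproj⟩
    obtain ⟨r, u, hu, hlift⟩ := exists_trace_map k hart hTfl hMfl hgenM
    set K := LinearMap.ker u with hKdef
    have hKfl : IsFiniteLength Λ ↥K :=
      isFiniteLength_iff_isNoetherian_isArtinian.mpr ⟨inferInstance, inferInstance⟩
    -- Ext¹(T, K) = 0 over Λ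
    have hTK : ExtVanish Λ T ↥K := extVanish_ker (extVanish_pi_right hTT r) u hlift
    -- R-module structure on K
    have hkillK : ∀ a : Λ, π a = 0 → ∀ x : ↥K, a • x = 0 := by
      intro a ha x
      apply Subtype.ext
      show a • (x : Fin r → T) = 0
      funext i
      show a • (x : Fin r → T) i = 0
      exact hkillT a ha _
    letI : Module (suppCon Λ T).Quotient ↥K := liftModule π hπs ↥K hkillK
    have compatK : ∀ (a : Λ) (x : ↥K), a • x = π a • x := liftModule_compat π hπs ↥K hkillK
    have hTK_R : ExtVanish (suppCon Λ T).Quotient T ↥K :=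
      extVanish_R_of_Λ π hπs compatT compatK hTK
    -- Ext¹(Y, K) = 0 over R
    obtain ⟨mY, ιY, pY, hpY⟩ := hY
    have hYK_R : ExtVanish (suppCon Λ T).Quotient ↥Y ↥K :=
      extVanish_inAdd_left hTK_R ιY pY hpY
    -- extension of maps along f₀
    have hext : ∀ h : (suppCon Λ T).Quotient →ₗ[(suppCon Λ T).Quotient] ↥K,
        ∃ η : ↥X →ₗ[(suppCon Λ T).Quotient] ↥K, η.comp f₀ = h := fun h =>
      extVanish_extend hYK_R f₀ g₀ hf₀ hg₀ hr₀ h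
    -- Λ-module structure on X
    letI : Module Λ ↥X := Module.compHom ↥X π
    have compatX : ∀ (a : Λ) (x : ↥X), a • x = π a • x := fun a x => rfl
    -- spanning family of K
    haveI : Module.Finite Λ ↥K := ⟨IsNoetherian.noetherian ⊤⟩
    obtain ⟨s, κ, hκ⟩ := Module.Finite.exists_fin (R := Λ) (M := ↥K)
    have hη : ∀ j, ∃ η : ↥X →ₗ[Λ] ↥K, κ j ∈ LinearMap.range η := by
      intro j
      obtain ⟨η, hηc⟩ := hext (LinearMap.toSpanSingleton (suppCon Λ T).Quotient ↥K (κ j))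
      refine ⟨toLambdaLin π compatX compatK η, ⟨f₀ 1, ?_⟩⟩
      have h1 := LinearMap.congr_fun hηc 1
      simp at h1
      exact h1
    choose η hηr using hη
    have hgenX : Generates Λ T ↥X := by
      obtain ⟨mX, ιX, pX, hpX⟩ := hX
      have compatPi : ∀ (a : Λ) (v : Fin mX → T), a • v = π a • v := fun a v =>
        funext fun i => compatT a (v i)
      refine ⟨mX, toLambdaLin π compatPi compatX pX, fun x => ⟨ιX x, ?_⟩⟩
      exact LinearMap.congr_fun hpX x
    have hgenK : Generates Λ T ↥K := generates_of_span κ hκ η hηr hgenX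
    have hMK : ExtVanish Λ ↥M ↥K := hproj (ModuleCat.of Λ ↥K) hKfl hgenK
    obtain ⟨sM, hsM⟩ := hMK (Fin r → T) K.subtype u K.injective_subtype hu
      ((Submodule.range_subtype K).trans hKdef)
    exact ⟨r, sM, u, hsM⟩
  · -- `add T` implies Ext-projective
    rintro ⟨m, ι, p, hpι⟩
    refine ⟨⟨m, p, fun x => ⟨ι x, LinearMap.congr_fun hpι x⟩⟩, ?_⟩
    intro C hCfl hCgen
    obtain ⟨n, w, hw⟩ := hCgen
    have hTC : ExtVanish Λ T ↥C := extVanish_of_surj hher (extVanish_pi_right hTT n) w hw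
    exact extVanish_inAdd_left hTC ι p hpι
end

section
/- Let Λ be a hereditary artin algebra and T a module with Ext¹(T,T) = 0. Then 𝒢(T), the class of modules generated by T, is a torsion class (closed under quotient modules and extensions) and T is a cover of 𝒢(T). -/
open CategoryTheory

section Helpers

open Function

variable {Λ : Type} [Ring Λ]

lemma extVanish_of_equiv {X A A' : Type} [AddCommGroup X] [Module Λ X] [AddCommGroup A]
    [Module Λ A] [AddCommGroup A'] [Module Λ A'] (e : A ≃ₗ[Λ] A')
    (h : ExtVanish Λ X A) : ExtVanish Λ X A' := by
  intro E _ _ f g hf hg hfg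
  refine h E (f ∘ₗ e.toLinearMap) g (hf.comp e.injective) hg ?_
  rw [LinearMap.range_comp, LinearEquiv.range, Submodule.map_top, hfg]

lemma extVanish_of_subsingleton_s11 {X A : Type} [AddCommGroup X] [Module Λ X] [AddCommGroup A]
    [Module Λ A] [Subsingleton A] : ExtVanish Λ X A := by
  intro E _ _ f g hf hg hfg
  have hf0 : f = 0 := Subsingleton.elim _ _
  have hginj : Function.Injective g := by
    rw [← LinearMap.ker_eq_bot, ← hfg, hf0, LinearMap.range_zero]
  let e := LinearEquiv.ofBijective g ⟨hginj, hg⟩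
  exact ⟨e.symm.toLinearMap, by ext x; exact e.apply_symm_apply x⟩

lemma extVanish_prod_right_s11 {X A B : Type} [AddCommGroup X] [Module Λ X] [AddCommGroup A]
    [Module Λ A] [AddCommGroup B] [Module Λ B]
    (hA : ExtVanish Λ X A) (hB : ExtVanish Λ X B) : ExtVanish Λ X (A × B) := by
  intro E _ _ f g hf hg hfg
  have hgf : ∀ x, g (f x) = 0 := fun x => by
    have : f x ∈ LinearMap.ker g := hfg ▸ LinearMap.mem_range_self f x
    exact this
  set A' : Submodule Λ E := LinearMap.range (f ∘ₗ LinearMap.inl Λ A B) with hA'def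
  have hA'ker : A' ≤ LinearMap.ker g := by
    rintro _ ⟨a, rfl⟩
    exact hgf _
  let gbar : (E ⧸ A') →ₗ[Λ] X := A'.liftQ g hA'ker
  have hgbar : ∀ e : E, gbar (A'.mkQ e) = g e := fun e => rfl
  let fB : B →ₗ[Λ] E ⧸ A' := A'.mkQ ∘ₗ f ∘ₗ LinearMap.inr Λ A B
  have hfBinj : Function.Injective fB := by
    intro b b' hbb'
    have : f (0, b) - f (0, b') ∈ A' := by
      have h := hbb'
      simp only [fB, LinearMap.comp_apply, Submodule.mkQ_apply] at h
      exact (Submodule.Quotient.eq A').mp h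
    obtain ⟨a, ha⟩ := this
    have : f (a, 0) = f ((0, b) - (0, b')) := by rw [map_sub]; exact ha
    have h2 := hf this
    have hb : (0:B) = b - b' := congrArg Prod.snd h2
    exact eq_of_sub_eq_zero hb.symm
  have hgbarsurj : Function.Surjective gbar := by
    intro x
    obtain ⟨e, rfl⟩ := hg x
    exact ⟨A'.mkQ e, rfl⟩
  have hrangefB : LinearMap.range fB = LinearMap.ker gbar := by
    apply le_antisymm
    · rintro _ ⟨b, rfl⟩
      show gbar (A'.mkQ (f (0, b))) = 0
      rw [hgbar]; exact hgf _
    · rintro z hz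
      obtain ⟨e, rfl⟩ := A'.mkQ_surjective z
      have : g e = 0 := hz
      have : e ∈ LinearMap.range f := hfg ▸ this
      obtain ⟨⟨a, b⟩, rfl⟩ := this
      refine ⟨b, ?_⟩
      show A'.mkQ (f (0, b)) = A'.mkQ (f (a, b))
      simp only [Submodule.mkQ_apply]
      rw [Submodule.Quotient.eq]
      refine ⟨-a, ?_⟩
      show f (-a, 0) = f (0, b) - f (a, b)
      rw [← map_sub]
      congr 1
      simp [Prod.ext_iff]
  obtain ⟨s₁, hs₁⟩ := hB (E ⧸ A') fB gbar hfBinj hgbarsurj hrangefB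
  -- pullback
  let F' : Submodule Λ (E × X) :=
    LinearMap.ker ((A'.mkQ ∘ₗ LinearMap.fst Λ E X) - (s₁ ∘ₗ LinearMap.snd Λ E X))
  have memF' : ∀ p : E × X, p ∈ F' ↔ A'.mkQ p.1 = s₁ p.2 := by
    intro p
    constructor
    · intro h; exact sub_eq_zero.mp h
    · intro h; exact sub_eq_zero.mpr h
  let fA : A →ₗ[Λ] F' :=
    LinearMap.codRestrict F' (LinearMap.prod (f ∘ₗ LinearMap.inl Λ A B) 0) (by
      intro a
      rw [memF']
      show A'.mkQ (f (a, 0)) = s₁ 0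
      rw [map_zero, Submodule.mkQ_apply, Submodule.Quotient.mk_eq_zero]
      exact ⟨a, rfl⟩)
  let gF : F' →ₗ[Λ] X := (LinearMap.snd Λ E X) ∘ₗ F'.subtype
  have hfAinj : Function.Injective fA := by
    intro a a' h
    have : f (a, 0) = f (a', 0) := congrArg (fun z : F' => (z : E × X).1) h
    have := hf this
    simpa [Prod.ext_iff] using this
  have hgFsurj : Function.Surjective gF := by
    intro x
    obtain ⟨e, he⟩ := A'.mkQ_surjective (s₁ x)
    exact ⟨⟨(e, x), (memF' (e, x)).mpr he⟩, rfl⟩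
  have hrangefA : LinearMap.range fA = LinearMap.ker gF := by
    apply le_antisymm
    · rintro _ ⟨a, rfl⟩
      show ((fA a : E × X)).2 = 0
      rfl
    · rintro ⟨⟨e, x⟩, hex⟩ hz
      have hx : x = 0 := hz
      subst hx
      have : A'.mkQ e = 0 := by
        have := (memF' (e, 0)).mp hex
        rwa [map_zero] at this
      have : e ∈ A' := (Submodule.Quotient.mk_eq_zero A').mp this
      obtain ⟨a, ha⟩ := this
      refine ⟨a, Subtype.ext ?_⟩
      show ((f ∘ₗ LinearMap.inl Λ A B) a, (0:X)) = (e, 0)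
      rw [Prod.mk.injEq]
      exact ⟨ha, rfl⟩
  obtain ⟨s₂, hs₂⟩ := hA F' fA gF hfAinj hgFsurj hrangefA
  refine ⟨(LinearMap.fst Λ E X) ∘ₗ F'.subtype ∘ₗ s₂, ?_⟩
  ext x
  have h1 : ((s₂ x : E × X)).2 = x := congrFun (congrArg DFunLike.coe hs₂) x
  have h2 : A'.mkQ ((s₂ x : E × X)).1 = s₁ ((s₂ x : E × X)).2 := (memF' _).mp (s₂ x).2
  show g ((s₂ x : E × X)).1 = x
  have : gbar (A'.mkQ ((s₂ x : E × X)).1) = g ((s₂ x : E × X)).1 := hgbar _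
  rw [← this, h2, h1]
  exact congrFun (congrArg DFunLike.coe hs₁) x

/-- Linear equivalence `(Fin (m+1) → T) ≃ T × (Fin m → T)`. -/
def piSuccEquiv (T : Type) [AddCommGroup T] [Module Λ T] (m : ℕ) :
    (Fin (m + 1) → T) ≃ₗ[Λ] T × (Fin m → T) where
  toFun v := (v 0, fun i => v i.succ)
  invFun p := Fin.cons p.1 p.2
  map_add' v w := rfl
  map_smul' c v := rfl
  left_inv v := by
    funext i
    exact Fin.cases rfl (fun j => rfl) i
  right_inv p := rfl

lemma extVanish_pi_right_s11 {X T : Type} [AddCommGroup X] [Module Λ X] [AddCommGroup T]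
    [Module Λ T] (h : ExtVanish Λ X T) : ∀ m : ℕ, ExtVanish Λ X (Fin m → T) := by
  intro m
  induction m with
  | zero => exact extVanish_of_subsingleton_s11
  | succ m ih =>
      exact extVanish_of_equiv (piSuccEquiv T m).symm (extVanish_prod_right_s11 h ih)

lemma extVanish_pi_left_s11 {T Y : Type} [AddCommGroup T] [Module Λ T] [AddCommGroup Y]
    [Module Λ Y] (h : ExtVanish Λ T Y) (n : ℕ) : ExtVanish Λ (Fin n → T) Y := by
  intro E _ _ f g hf hg hfg
  have hgf : ∀ x, g (f x) = 0 := fun x => by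
    have : f x ∈ LinearMap.ker g := hfg ▸ LinearMap.mem_range_self f x
    exact this
  have key : ∀ i : Fin n, ∃ s : T →ₗ[Λ] E, ∀ t, g (s t) = Pi.single i t := by
    intro i
    let Ei : Submodule Λ E :=
      Submodule.comap g (LinearMap.range (LinearMap.single Λ (fun _ : Fin n => T) i))
    let fi : Y →ₗ[Λ] Ei := LinearMap.codRestrict Ei f (fun y =>
      Submodule.mem_comap.mpr (by rw [hgf y]; exact Submodule.zero_mem _))
    let gi : Ei →ₗ[Λ] T := (LinearMap.proj i) ∘ₗ g ∘ₗ Ei.subtype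
    have hfiinj : Function.Injective fi := fun y y' hy =>
      hf (congrArg Subtype.val hy)
    have hgisurj : Function.Surjective gi := by
      intro t
      obtain ⟨e, he⟩ := hg (Pi.single i t)
      refine ⟨⟨e, Submodule.mem_comap.mpr ?_⟩, ?_⟩
      · rw [he]
        exact ⟨t, rfl⟩
      · show (g e) i = t
        rw [he, Pi.single_eq_same]
    have hrange : LinearMap.range fi = LinearMap.ker gi := by
      apply le_antisymm
      · rintro _ ⟨y, rfl⟩
        show (g (f y)) i = 0
        rw [hgf]
        rfl
      · rintro ⟨e, he⟩ hz
        obtain ⟨t, ht⟩ := he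
        have ht' : Pi.single i t = g e := ht
        have hti : t = 0 := by
          have : (g e) i = 0 := hz
          rw [← ht', Pi.single_eq_same] at this
          exact this
        have : g e = 0 := by rw [← ht', hti]; exact Pi.single_zero i
        have : e ∈ LinearMap.range f := hfg ▸ this
        obtain ⟨y, hy⟩ := this
        exact ⟨y, Subtype.ext hy⟩
    obtain ⟨si, hsi⟩ := h Ei fi gi hfiinj hgisurj hrange
    refine ⟨Ei.subtype ∘ₗ si, fun t => ?_⟩
    have h1 : gi (si t) = t := congrFun (congrArg DFunLike.coe hsi) t
    have h2 : g ((si t : E)) ∈ LinearMap.range (LinearMap.single Λ (fun _ : Fin n => T) i) :=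
      (si t).2
    obtain ⟨u, hu⟩ := h2
    have hu' : Pi.single i u = g ((si t : E)) := hu
    have : u = t := by
      have : (g ((si t : E))) i = t := h1
      rw [← hu', Pi.single_eq_same] at this
      exact this
    show g ((si t : E)) = Pi.single i t
    rw [← hu', this]
  choose s hs using key
  refine ⟨∑ i, (s i) ∘ₗ (LinearMap.proj i), ?_⟩
  apply LinearMap.ext
  intro v
  show g ((∑ i, (s i) ∘ₗ (LinearMap.proj i)) v) = v
  rw [LinearMap.sum_apply, map_sum]
  have : ∀ i, g (((s i) ∘ₗ (LinearMap.proj i)) v) = Pi.single i (v i) := fun i => hs i (v i)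
  rw [Finset.sum_congr rfl (fun i _ => this i)]
  exact Finset.univ_sum_single v

lemma extVanish_of_gen {X P M : Type} [AddCommGroup X] [Module Λ X] [AddCommGroup P]
    [Module Λ P] [AddCommGroup M] [Module Λ M] (hher : IsHereditaryRing Λ)
    [Module.Finite Λ X] (q : P →ₗ[Λ] M) (hq : Function.Surjective q)
    (hXP : ExtVanish Λ X P) : ExtVanish Λ X M := by
  intro E _ _ f g hf hg hfg
  have hgf : ∀ x, g (f x) = 0 := fun x => by
    have : f x ∈ LinearMap.ker g := hfg ▸ LinearMap.mem_range_self f x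
    exact this
  obtain ⟨r, π, hπ⟩ := Module.Finite.exists_fin' Λ X
  haveI hR0 : Module.Projective Λ (LinearMap.ker π) :=
    hher (Fin r → Λ) inferInstance (LinearMap.ker π)
  obtain ⟨h, hh⟩ := Module.projective_lifting_property g π hg
  have hh' : ∀ u, g (h u) = π u := fun u => congrFun (congrArg DFunLike.coe hh) u
  have hhr : ∀ x : LinearMap.ker π, h (x : Fin r → Λ) ∈ LinearMap.range f := fun x => by
    rw [hfg]
    show g (h (x : Fin r → Λ)) = 0
    rw [hh']
    exact x.2
  let e := LinearEquiv.ofInjective f hf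
  let α : (LinearMap.ker π) →ₗ[Λ] M :=
    e.symm.toLinearMap ∘ₗ
      LinearMap.codRestrict (LinearMap.range f) (h ∘ₗ (LinearMap.ker π).subtype) hhr
  have hα : ∀ x : LinearMap.ker π, f (α x) = h (x : Fin r → Λ) := fun x => by
    show f (e.symm ⟨h (x : Fin r → Λ), hhr x⟩) = h (x : Fin r → Λ)
    exact LinearEquiv.ofInjective_symm_apply (f := f) (h := hf) ⟨h (x : Fin r → Λ), hhr x⟩
  obtain ⟨β, hβ⟩ := Module.projective_lifting_property q α hq
  have hβ' : ∀ x, q (β x) = α x := fun x => congrFun (congrArg DFunLike.coe hβ) x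
  -- pushout
  set W : Submodule Λ (P × (Fin r → Λ)) :=
    LinearMap.range (LinearMap.prod β (-(LinearMap.ker π).subtype)) with hWdef
  let j : P →ₗ[Λ] (P × (Fin r → Λ)) ⧸ W := W.mkQ ∘ₗ LinearMap.inl Λ P (Fin r → Λ)
  have hWker : W ≤ LinearMap.ker (π ∘ₗ LinearMap.snd Λ P (Fin r → Λ)) := by
    rintro _ ⟨x, rfl⟩
    show π (-(x : Fin r → Λ)) = 0
    rw [map_neg, x.2, neg_zero]
  let π' : ((P × (Fin r → Λ)) ⧸ W) →ₗ[Λ] X :=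
    W.liftQ (π ∘ₗ LinearMap.snd Λ P (Fin r → Λ)) hWker
  have hπ'mk : ∀ z : P × (Fin r → Λ), π' (W.mkQ z) = π z.2 := fun z => rfl
  have hjinj : Function.Injective j := by
    intro p p' hpp'
    have : ((p, 0) : P × (Fin r → Λ)) - (p', 0) ∈ W := by
      rw [← Submodule.Quotient.eq W]
      exact hpp'
    obtain ⟨x, hx⟩ := this
    have hx2 : -(x : Fin r → Λ) = 0 - 0 := congrArg Prod.snd hx
    have hx0 : x = 0 := by
      have : (x : Fin r → Λ) = 0 := by
        rw [sub_zero] at hx2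
        exact neg_eq_zero.mp hx2
      exact Subtype.ext this
    have hx1 : β x = p - p' := congrArg Prod.fst hx
    rw [hx0, map_zero] at hx1
    exact (sub_eq_zero.mp hx1.symm)
  have hπ'surj : Function.Surjective π' := by
    intro x
    obtain ⟨u, hu⟩ := hπ x
    exact ⟨W.mkQ (0, u), hu⟩
  have hrange : LinearMap.range j = LinearMap.ker π' := by
    apply le_antisymm
    · rintro _ ⟨p, rfl⟩
      show π' (W.mkQ (p, 0)) = 0
      rw [hπ'mk]
      exact map_zero π
    · intro z hz
      obtain ⟨⟨p, u⟩, rfl⟩ := W.mkQ_surjective z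
      have hu : π u = 0 := hz
      refine ⟨p + β ⟨u, hu⟩, ?_⟩
      show W.mkQ (p + β ⟨u, hu⟩, 0) = W.mkQ (p, u)
      simp only [Submodule.mkQ_apply]
      rw [Submodule.Quotient.eq]
      refine ⟨⟨u, hu⟩, ?_⟩
      show (β ⟨u, hu⟩, -u) = (p + β ⟨u, hu⟩, 0) - (p, u)
      rw [Prod.mk_sub_mk, Prod.mk.injEq]
      constructor
      · abel
      · abel
  obtain ⟨s, hs⟩ := hXP _ j π' hjinj hπ'surj hrange
  have hWker2 : W ≤ LinearMap.ker
      ((f ∘ₗ q ∘ₗ LinearMap.fst Λ P (Fin r → Λ)) + (h ∘ₗ LinearMap.snd Λ P (Fin r → Λ))) := by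
    rintro _ ⟨x, rfl⟩
    show f (q (β x)) + h (-(x : Fin r → Λ)) = 0
    rw [hβ', map_neg, hα, add_neg_cancel]
  let φ : ((P × (Fin r → Λ)) ⧸ W) →ₗ[Λ] E :=
    W.liftQ ((f ∘ₗ q ∘ₗ LinearMap.fst Λ P (Fin r → Λ)) +
      (h ∘ₗ LinearMap.snd Λ P (Fin r → Λ))) hWker2
  have hgφ : ∀ z, g (φ z) = π' z := by
    intro z
    obtain ⟨⟨p, u⟩, rfl⟩ := W.mkQ_surjective z
    show g (f (q p) + h u) = π' (W.mkQ (p, u))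
    rw [map_add, hgf, hh', hπ'mk, zero_add]
  refine ⟨φ ∘ₗ s, ?_⟩
  apply LinearMap.ext
  intro x
  show g (φ (s x)) = x
  rw [hgφ]
  exact congrFun (congrArg DFunLike.coe hs) x

end Helpers

/-- If `Ext¹(T, T) = 0` then `𝒢(T)` is a torsion class and `T` is a cover of it. -/
theorem stmt11 (k : Type) [CommRing k] [IsArtinianRing k]
    (Λ : Type) [Ring Λ] [Algebra k Λ] (hart : IsFiniteLength k Λ)
    (hher : IsHereditaryRing Λ)
    (T : Type) [AddCommGroup T] [Module Λ T] (hTfl : IsFiniteLength Λ T)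
    (hself : ExtVanish Λ T T) :
    IsTorsionClass Λ (GenClass Λ T) ∧ ModuleCat.of Λ T ∈ GenClass Λ T ∧
      ∀ M ∈ GenClass Λ T, Generates Λ T M := by
  haveI hTfin : Module.Finite Λ T :=
    ⟨(isFiniteLength_iff_isNoetherian_isArtinian.mp hTfl).1.noetherian ⊤⟩
  refine ⟨⟨?_, ?_⟩, ?_, ?_⟩
  · -- quotient closed
    rintro M ⟨hMfl, nn, s, hssurj⟩ N f hfsurj
    rw [isFiniteLength_iff_isNoetherian_isArtinian] at hMfl
    haveI := hMfl.1
    haveI := hMfl.2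
    refine ⟨?_, nn, f ∘ₗ s, hfsurj.comp hssurj⟩
    rw [isFiniteLength_iff_isNoetherian_isArtinian]
    exact ⟨isNoetherian_of_surjective f (LinearMap.range_eq_top.mpr hfsurj),
      isArtinian_of_surjective _ f hfsurj⟩
  · -- extension closed
    rintro M E N f g hfinj hgsurj hexact ⟨hMfl, m, qm, hqm⟩ ⟨hNfl, n, p, hp⟩
    have hgf : ∀ x, g (f x) = 0 := fun x => by
      have : f x ∈ LinearMap.ker g := hexact ▸ LinearMap.mem_range_self f x
      exact this
    rw [isFiniteLength_iff_isNoetherian_isArtinian] at hMfl hNfl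
    haveI := hMfl.1; haveI := hMfl.2; haveI := hNfl.1; haveI := hNfl.2
    have hEfl : IsFiniteLength Λ E := by
      rw [isFiniteLength_iff_isNoetherian_isArtinian]
      exact ⟨isNoetherian_of_range_eq_ker f g hexact,
        isArtinian_of_range_eq_ker f g hexact⟩
    -- Ext vanishing
    have hXM : ExtVanish Λ (Fin n → T) ↥M :=
      extVanish_of_gen hher qm hqm (extVanish_pi_right_s11 (extVanish_pi_left_s11 hself n) m)
    -- pullback
    set E' : Submodule Λ (↥E × (Fin n → T)) :=
      LinearMap.ker ((g ∘ₗ LinearMap.fst Λ ↥E (Fin n → T)) -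
        (p ∘ₗ LinearMap.snd Λ ↥E (Fin n → T))) with hE'def
    have memE' : ∀ z : ↥E × (Fin n → T), z ∈ E' ↔ g z.1 = p z.2 := by
      intro z
      constructor
      · intro h; exact sub_eq_zero.mp h
      · intro h; exact sub_eq_zero.mpr h
    let fM : ↥M →ₗ[Λ] E' := LinearMap.codRestrict E' (LinearMap.prod f 0) (fun x =>
      (memE' _).mpr (by show g (f x) = p 0; rw [hgf, map_zero]))
    let gE : E' →ₗ[Λ] (Fin n → T) := LinearMap.snd Λ ↥E (Fin n → T) ∘ₗ E'.subtype
    have hfMinj : Function.Injective fM := by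
      intro x x' hxx'
      exact hfinj (congrArg (fun z : E' => (z : ↥E × (Fin n → T)).1) hxx')
    have hgEsurj : Function.Surjective gE := by
      intro t
      obtain ⟨e, he⟩ := hgsurj (p t)
      exact ⟨⟨(e, t), (memE' _).mpr he⟩, rfl⟩
    have hrangefM : LinearMap.range fM = LinearMap.ker gE := by
      apply le_antisymm
      · rintro _ ⟨x, rfl⟩
        show ((fM x : ↥E × (Fin n → T))).2 = 0
        rfl
      · rintro ⟨⟨e, t⟩, het⟩ hz
        have ht : t = 0 := hz
        subst ht
        have : g e = 0 := by
          have := (memE' (e, 0)).mp het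
          rwa [map_zero] at this
        have : e ∈ LinearMap.range f := hexact ▸ this
        obtain ⟨x, hx⟩ := this
        refine ⟨x, Subtype.ext ?_⟩
        show (f x, (0:Fin n → T)) = (e, 0)
        rw [Prod.mk.injEq]
        exact ⟨hx, rfl⟩
    obtain ⟨s, hs⟩ := hXM E' fM gE hfMinj hgEsurj hrangefM
    refine ⟨hEfl, m + n, ?_⟩
    let L1 : (Fin (m + n) → T) →ₗ[Λ] (Fin m → T) := LinearMap.funLeft Λ T (Fin.castAdd n)
    let L2 : (Fin (m + n) → T) →ₗ[Λ] (Fin n → T) := LinearMap.funLeft Λ T (Fin.natAdd m)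
    refine ⟨(f ∘ₗ qm ∘ₗ L1) +
      ((LinearMap.fst Λ ↥E (Fin n → T)) ∘ₗ E'.subtype ∘ₗ s ∘ₗ L2), ?_⟩
    intro e
    obtain ⟨t, ht⟩ := hp (g e)
    have hmem : (e, t) ∈ E' := (memE' _).mpr ht.symm
    have hker : (⟨(e, t), hmem⟩ : E') - s t ∈ LinearMap.ker gE := by
      show gE ((⟨(e, t), hmem⟩ : E') - s t) = 0
      rw [map_sub]
      have h1 : gE (⟨(e, t), hmem⟩ : E') = t := rfl
      have h2 : gE (s t) = t := congrFun (congrArg DFunLike.coe hs) t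
      rw [h1, h2, sub_self]
    rw [← hrangefM] at hker
    obtain ⟨x, hx⟩ := hker
    obtain ⟨a, ha⟩ := hqm x
    refine ⟨Fin.append a t, ?_⟩
    have hL1 : L1 (Fin.append a t) = a := funext fun i => Fin.append_left a t i
    have hL2 : L2 (Fin.append a t) = t := funext fun i => Fin.append_right a t i
    show f (qm (L1 (Fin.append a t))) +
      ((s (L2 (Fin.append a t)) : ↥E × (Fin n → T))).1 = e
    rw [hL1, hL2, ha]
    have hval : ((fM x : ↥E × (Fin n → T))).1 =
        ((((⟨(e, t), hmem⟩ : E') - s t : E') : ↥E × (Fin n → T))).1 :=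
      congrArg (fun z : E' => (z : ↥E × (Fin n → T)).1) hx
    have : f x = e - ((s t : ↥E × (Fin n → T))).1 := hval
    rw [this]
    abel
  · exact ⟨hTfl, 1, LinearMap.proj 0, fun t => ⟨fun _ => t, rfl⟩⟩
  · rintro M ⟨-, hgen⟩
    exact hgen
end
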